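/- arXiv:2404.14603 — 11 statements merged into one kernel-verified Lean document; each statement's English description precedes it below -/
import Mathlib

section
/- Existence of a causal representation uniformly in the CATE function (Theorem 1): Let a : Ω → ℝ be 𝒢-measurable with E[a²] < ∞, E[a] > 0, and essential supremum a_max := essSup(a) < ∞. Then there exists a weight function w (𝒢-measurable, 0 ≤ w ≤ 1 pointwise, E[w] > 0) such that E[a·τ]/E[a] = E[w·τ]/E[w] for every 𝒢-measurable τ : Ω → ℝ with E[τ²] < ∞, if and only if a ≥ 0 P-almost surely. -/
open MeasureTheory

lemma aux_indicator_L2 {Ω : Type*} [m : MeasurableSpace Ω] (P : Measure Ω)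
    [IsProbabilityMeasure P] {s : Set Ω} (hs : MeasurableSet s) :
    MemLp (s.indicator fun _ => (1 : ℝ)) 2 P :=
  memLp_indicator_const 2 hs (1 : ℝ) (Or.inr (measure_ne_top P s))

lemma aux_forward {Ω : Type*} [m : MeasurableSpace Ω] (P : Measure Ω) [IsProbabilityMeasure P]
    (a w : Ω → ℝ) (ha_int : Integrable a P) (ha_pos : 0 < ∫ ω, a ω ∂P)
    (hw_nn : ∀ ω, 0 ≤ w ω) (hw_pos : 0 < ∫ ω, w ω ∂P)
    (hs : MeasurableSet {ω | a ω < 0}) (hPs : P {ω | a ω < 0} ≠ 0)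
    (key : (∫ ω, a ω * ({ω | a ω < 0}.indicator fun _ => (1:ℝ)) ω ∂P) / (∫ ω, a ω ∂P)
      = (∫ ω, w ω * ({ω | a ω < 0}.indicator fun _ => (1:ℝ)) ω ∂P) / (∫ ω, w ω ∂P)) :
    False := by
  set s : Set Ω := {ω | a ω < 0} with hs_def
  have hPs' : 0 < P s := pos_iff_ne_zero.mpr hPs
  have haτ : (fun ω => a ω * (s.indicator fun _ => (1:ℝ)) ω) = s.indicator a := by
    funext ω
    by_cases hω : ω ∈ s <;> simp [Set.indicator, hω]
  have hint_aτ : (∫ ω, a ω * (s.indicator fun _ => (1:ℝ)) ω ∂P) = ∫ ω in s, a ω ∂P := by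
    rw [haτ, integral_indicator hs]
  have hneg : (∫ ω in s, a ω ∂P) < 0 := by
    have hnn : 0 ≤ᵐ[P.restrict s] fun ω => -a ω := by
      filter_upwards [ae_restrict_mem hs] with ω hω
      simp only [hs_def, Set.mem_setOf_eq] at hω
      simp only [Pi.zero_apply]
      linarith
    have hion : IntegrableOn (fun ω => -a ω) s P := ha_int.neg.integrableOn
    have hpos : 0 < ∫ ω in s, -a ω ∂P := by
      rw [setIntegral_pos_iff_support_of_nonneg_ae hnn hion]
      refine lt_of_lt_of_le hPs' (measure_mono ?_)
      intro ω hω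
      refine ⟨?_, hω⟩
      simp only [hs_def, Set.mem_setOf_eq] at hω
      simp only [Function.mem_support]
      intro hc; rw [neg_eq_zero] at hc; rw [hc] at hω; exact lt_irrefl 0 hω
    rw [integral_neg] at hpos
    linarith
  have hwτ : (fun ω => w ω * (s.indicator fun _ => (1:ℝ)) ω) = s.indicator w := by
    funext ω
    by_cases hω : ω ∈ s <;> simp [Set.indicator, hω]
  have hint_wτ : 0 ≤ ∫ ω, w ω * (s.indicator fun _ => (1:ℝ)) ω ∂P := by
    rw [hwτ, integral_indicator hs]
    exact setIntegral_nonneg hs fun ω _ => hw_nn ω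
  have hL : (∫ ω, a ω * (s.indicator fun _ => (1:ℝ)) ω ∂P) / (∫ ω, a ω ∂P) < 0 := by
    rw [hint_aτ]
    exact div_neg_of_neg_of_pos hneg ha_pos
  have hR : 0 ≤ (∫ ω, w ω * (s.indicator fun _ => (1:ℝ)) ω ∂P) / (∫ ω, w ω ∂P) :=
    div_nonneg hint_wτ hw_pos.le
  rw [key] at hL
  linarith

lemma aux_backward {Ω : Type*} [m : MeasurableSpace Ω] (P : Measure Ω) [IsProbabilityMeasure P]
    (a : Ω → ℝ) (ha_L2 : MemLp a 2 P) (ha_pos : 0 < ∫ ω, a ω ∂P)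
    (C : ℝ) (hC_pos : 0 < C)
    (hae : (fun ω => max 0 (min (a ω) C) / C) =ᵐ[P] fun ω => a ω / C) :
    (0 < ∫ ω, max 0 (min (a ω) C) / C ∂P) ∧
    ∀ τ : Ω → ℝ, MemLp τ 2 P →
      (∫ ω, a ω * τ ω ∂P) / (∫ ω, a ω ∂P)
        = (∫ ω, max 0 (min (a ω) C) / C * τ ω ∂P) / (∫ ω, max 0 (min (a ω) C) / C ∂P) := by
  have h2 : (∫ ω, max 0 (min (a ω) C) / C ∂P) = (∫ ω, a ω ∂P) / C := by
    rw [← integral_div]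
    exact integral_congr_ae hae
  constructor
  · rw [h2]
    exact div_pos ha_pos hC_pos
  · intro τ hτ_L2
    have haτ_int : Integrable (fun ω => a ω * τ ω) P := by
      have h12 : (1:ENNReal)/1 = 1/2 + 1/2 := by
        rw [ENNReal.div_add_div_same, one_div_one, show (1:ENNReal)+1 = 2 from one_add_one_eq_two,
          ENNReal.div_self (by norm_num) (by norm_num)]
      have := (hτ_L2.smul (φ := a) (p := 2) (r := 1) ha_L2).integrable le_rfl
      exact this
    have h1 : (∫ ω, max 0 (min (a ω) C) / C * τ ω ∂P) = (∫ ω, a ω * τ ω ∂P) / C := by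
      rw [← integral_div]
      apply integral_congr_ae
      filter_upwards [hae] with ω hω
      rw [hω]; ring
    rw [h1, h2, div_div_div_cancel_right₀ hC_pos.ne']

/-- **Theorem 1** (Existence of a causal representation uniformly in the CATE function).
Let `a` be `𝒢`-measurable, square-integrable, with `E[a] > 0` and essentially bounded above.
Then there exists a weight function `w` (𝒢-measurable, `0 ≤ w ≤ 1` pointwise, `E[w] > 0`)
such that `E[a·τ]/E[a] = E[w·τ]/E[w]` for every 𝒢-measurable square-integrable `τ`,
if and only if `a ≥ 0` `P`-almost surely. -/
theorem existence_uniform_causal_representation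
    {Ω : Type*} {mΩ : MeasurableSpace Ω} (P : Measure Ω) [IsProbabilityMeasure P]
    (𝒢 : MeasurableSpace Ω) (h𝒢 : 𝒢 ≤ mΩ)
    (a : Ω → ℝ)
    (ha_meas : Measurable[𝒢] a)
    (ha_L2 : MemLp a 2 P)
    (ha_pos : 0 < ∫ ω, a ω ∂P)
    (ha_bdd : ∃ C : ℝ, ∀ᵐ ω ∂P, a ω ≤ C) :
    (∃ w : Ω → ℝ, Measurable[𝒢] w ∧ (∀ ω, 0 ≤ w ω ∧ w ω ≤ 1) ∧ (0 < ∫ ω, w ω ∂P) ∧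
      ∀ τ : Ω → ℝ, Measurable[𝒢] τ → MemLp τ 2 P →
        (∫ ω, a ω * τ ω ∂P) / (∫ ω, a ω ∂P) = (∫ ω, w ω * τ ω ∂P) / (∫ ω, w ω ∂P))
    ↔ (∀ᵐ ω ∂P, 0 ≤ a ω) := by
  have ha_int : Integrable a P := ha_L2.integrable one_le_two
  constructor
  · rintro ⟨w, hw_meas, hw_bd, hw_pos, hw⟩
    by_contra h
    have hs𝒢 : MeasurableSet[𝒢] {ω | a ω < 0} := ha_meas measurableSet_Iio
    have hs : MeasurableSet[mΩ] {ω | a ω < 0} := h𝒢 _ hs𝒢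
    have hPs : P {ω | a ω < 0} ≠ 0 := by
      intro hc
      apply h
      rw [ae_iff]
      have hset : {ω | ¬ 0 ≤ a ω} = {ω | a ω < 0} := by ext ω; simp [not_le]
      rw [hset]; exact hc
    have hτ_meas : Measurable[𝒢] ({ω | a ω < 0}.indicator fun _ => (1:ℝ)) :=
      measurable_const.indicator hs𝒢
    have hτ_L2 := aux_indicator_L2 (m := mΩ) P hs
    exact aux_forward (m := mΩ) P a w ha_int ha_pos (fun ω => (hw_bd ω).1) hw_pos
      hs hPs (hw _ hτ_meas hτ_L2)
  · intro ha_nn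
    obtain ⟨C, hC⟩ := ha_bdd
    have hC_pos : 0 < C := by
      have h1 : (∫ ω, a ω ∂P) ≤ ∫ _, C ∂P :=
        integral_mono_ae ha_int (integrable_const C) hC
      simp only [integral_const, measure_univ, ENNReal.toReal_one, probReal_univ, one_smul] at h1
      linarith
    have hae : (fun ω => max 0 (min (a ω) C) / C) =ᵐ[P] fun ω => a ω / C := by
      filter_upwards [ha_nn, hC] with ω h1 h2
      rw [min_eq_left h2, max_eq_right h1]
    obtain ⟨hint_pos, hratio⟩ := aux_backward (m := mΩ) P a ha_L2 ha_pos C hC_pos hae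
    refine ⟨fun ω => max 0 (min (a ω) C) / C, ?_, ?_, hint_pos, fun τ _ hτ_L2 => hratio τ hτ_L2⟩
    · exact Measurable.div (Measurable.max measurable_const (ha_meas.min measurable_const))
        measurable_const
    · intro ω
      constructor
      · exact div_nonneg (le_max_left 0 _) hC_pos.le
      · rw [div_le_one hC_pos]
        exact max_le hC_pos.le (min_le_right _ _)
end

section
/- Existence of a causal representation for a given CATE function (Theorem 2): Let a, τ₀ : Ω → ℝ be 𝒢-measurable with E[a²] < ∞, E[τ₀²] < ∞ and E[a] > 0, and set μ₀ := E[a·τ₀]/E[a]. Then there exists a weight function w (𝒢-measurable, 0 ≤ w ≤ 1 pointwise, E[w] > 0) with E[w·τ₀]/E[w] = μ₀ if and only if P(τ₀ ≤ μ₀) > 0 and P(τ₀ ≥ μ₀) > 0 (i.e., μ₀ lies in the set S(τ₀) of points weakly between the essential infimum and essential supremum of τ₀). -/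
open MeasureTheory

/-- Auxiliary: if the weighted integral of `τ₀ - μ₀` is zero and the weight has
positive integral, then `{τ₀ ≤ μ₀}` has positive measure (and symmetrically). -/
private lemma aux_pos_measure_le
    {Ω : Type*} {mΩ : MeasurableSpace Ω} (P : Measure Ω) [IsProbabilityMeasure P]
    (τ₀ w : Ω → ℝ) (hτm : Measurable τ₀) (hwm : Measurable w)
    (hτ_int : Integrable τ₀ P)
    (hw01 : ∀ ω, 0 ≤ w ω ∧ w ω ≤ 1)
    (hwpos : 0 < ∫ ω, w ω ∂P) (μ₀ : ℝ)
    (hkey : ∫ ω, w ω * (τ₀ ω - μ₀) ∂P = 0) :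
    0 < P {ω | τ₀ ω ≤ μ₀} := by
  by_contra h
  push_neg at h
  have hnull : P {ω | τ₀ ω ≤ μ₀} = 0 := le_antisymm h zero_le
  have hae : ∀ᵐ ω ∂P, μ₀ < τ₀ ω := by
    rw [ae_iff]
    convert hnull using 2
    ext ω; simp [not_lt]
  have hg_int : Integrable (fun ω => w ω * (τ₀ ω - μ₀)) P := by
    have : Integrable (fun ω => τ₀ ω - μ₀) P := hτ_int.sub (integrable_const μ₀)
    exact this.bdd_mul (c := 1) hwm.aestronglyMeasurable (ae_of_all _ fun ω => by
      rw [Real.norm_eq_abs, abs_of_nonneg (hw01 ω).1]; exact (hw01 ω).2)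
  have hg_nonneg : 0 ≤ᵐ[P] fun ω => w ω * (τ₀ ω - μ₀) := by
    filter_upwards [hae] with ω hω
    exact mul_nonneg (hw01 ω).1 (sub_nonneg.mpr hω.le)
  have hg0 : (fun ω => w ω * (τ₀ ω - μ₀)) =ᵐ[P] 0 :=
    (integral_eq_zero_iff_of_nonneg_ae hg_nonneg hg_int).mp hkey
  have hw0 : w =ᵐ[P] 0 := by
    filter_upwards [hg0, hae] with ω hω hω'
    have : τ₀ ω - μ₀ ≠ 0 := sub_ne_zero.mpr (ne_of_gt hω')
    simpa [this] using mul_eq_zero.mp hω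
  rw [integral_congr_ae hw0] at hwpos
  simp at hwpos


private lemma aux_construct {Ω : Type*} (𝒢 : MeasurableSpace Ω) [mΩ : MeasurableSpace Ω]
    (h𝒢 : 𝒢 ≤ mΩ) (P : Measure Ω) [IsProbabilityMeasure P]
    (τ₀ : Ω → ℝ) (μ₀ : ℝ) (hτ_meas : Measurable[𝒢] τ₀) (hτ_int : Integrable τ₀ P)
    (hPA : 0 < P {ω | τ₀ ω ≤ μ₀}) (hPB : 0 < P {ω | μ₀ ≤ τ₀ ω}) :
    ∃ w : Ω → ℝ, Measurable[𝒢] w ∧ (∀ ω, 0 ≤ w ω ∧ w ω ≤ 1) ∧ (0 < ∫ ω, w ω ∂P) ∧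
      (∫ ω, w ω * τ₀ ω ∂P) / (∫ ω, w ω ∂P) = μ₀ := by
  classical
  set A : Set Ω := {ω | τ₀ ω ≤ μ₀} with hA_def
  set B : Set Ω := {ω | μ₀ ≤ τ₀ ω} with hB_def
  have hA𝒢 : MeasurableSet[𝒢] A := hτ_meas measurableSet_Iic
  have hB𝒢 : MeasurableSet[𝒢] B := hτ_meas measurableSet_Ici
  have hA : MeasurableSet[mΩ] A := h𝒢 _ hA𝒢
  have hB : MeasurableSet[mΩ] B := h𝒢 _ hB𝒢
  set pA : ℝ := (P A).toReal with hpA_def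
  set pB : ℝ := (P B).toReal with hpB_def
  have hpA : 0 < pA := ENNReal.toReal_pos hPA.ne' (measure_ne_top P A)
  have hpB : 0 < pB := ENNReal.toReal_pos hPB.ne' (measure_ne_top P B)
  set mm : ℝ := ∫ ω in A, (μ₀ - τ₀ ω) ∂P with hmm_def
  set mp : ℝ := ∫ ω in B, (τ₀ ω - μ₀) ∂P with hmp_def
  have hmm_nonneg : 0 ≤ mm :=
    setIntegral_nonneg hA (fun ω hω => sub_nonneg.mpr hω)
  have hmp_nonneg : 0 ≤ mp :=
    setIntegral_nonneg hB (fun ω hω => sub_nonneg.mpr hω)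
  have hIA : ∫ ω in A, τ₀ ω ∂P = μ₀ * pA - mm := by
    have : mm = μ₀ * pA - ∫ ω in A, τ₀ ω ∂P := by
      rw [hmm_def, integral_sub (integrable_const μ₀).integrableOn hτ_int.integrableOn,
        setIntegral_const, smul_eq_mul, mul_comm]
      rfl
    linarith
  have hIB : ∫ ω in B, τ₀ ω ∂P = μ₀ * pB + mp := by
    have : mp = (∫ ω in B, τ₀ ω ∂P) - μ₀ * pB := by
      rw [hmp_def, integral_sub hτ_int.integrableOn (integrable_const μ₀).integrableOn,
        setIntegral_const, smul_eq_mul, mul_comm]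
      rfl
    linarith
  have hPiA : ∫ ω, A.indicator (fun _ => (1:ℝ)) ω ∂P = pA := by
    rw [integral_indicator hA, setIntegral_const, smul_eq_mul, mul_one]
    rfl
  have hPiB : ∫ ω, B.indicator (fun _ => (1:ℝ)) ω ∂P = pB := by
    rw [integral_indicator hB, setIntegral_const, smul_eq_mul, mul_one]
    rfl
  have hindA_mul : ∀ g : Ω → ℝ, ∀ ω, A.indicator (fun _ => (1:ℝ)) ω * g ω
      = A.indicator g ω := by
    intro g ω; by_cases h : ω ∈ A <;> simp [Set.indicator, h]
  have hindB_mul : ∀ g : Ω → ℝ, ∀ ω, B.indicator (fun _ => (1:ℝ)) ω * g ω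
      = B.indicator g ω := by
    intro g ω; by_cases h : ω ∈ B <;> simp [Set.indicator, h]
  have hIτA : ∫ ω, A.indicator τ₀ ω ∂P = μ₀ * pA - mm := by
    rw [integral_indicator hA]; exact hIA
  have hIτB : ∫ ω, B.indicator τ₀ ω ∂P = μ₀ * pB + mp := by
    rw [integral_indicator hB]; exact hIB
  have hiA : Integrable (A.indicator fun _ => (1:ℝ)) P := (integrable_const 1).indicator hA
  have hiB : Integrable (B.indicator fun _ => (1:ℝ)) P := (integrable_const 1).indicator hB
  have hiτA : Integrable (A.indicator τ₀) P := hτ_int.indicator hA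
  have hiτB : Integrable (B.indicator τ₀) P := hτ_int.indicator hB
  have hmeasA𝒢 : Measurable[𝒢] (A.indicator fun _ => (1:ℝ)) :=
    (@measurable_const ℝ Ω _ 𝒢 1).indicator hA𝒢
  have hmeasB𝒢 : Measurable[𝒢] (B.indicator fun _ => (1:ℝ)) :=
    (@measurable_const ℝ Ω _ 𝒢 1).indicator hB𝒢
  rcases eq_or_lt_of_le hmm_nonneg with hmm0 | hmm_pos
  · -- τ₀ = μ₀ a.e. on A; take w = 1_A
    refine ⟨A.indicator fun _ => 1, hmeasA𝒢, ?_, ?_, ?_⟩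
    · intro ω; by_cases h : ω ∈ A <;> simp [Set.indicator, h]
    · rw [hPiA]; exact hpA
    · have : (fun ω => A.indicator (fun _ => (1:ℝ)) ω * τ₀ ω) = A.indicator τ₀ :=
        funext (hindA_mul τ₀)
      rw [this, hIτA, hPiA, ← hmm0, sub_zero, mul_div_assoc, div_self hpA.ne', mul_one]
  rcases eq_or_lt_of_le hmp_nonneg with hmp0 | hmp_pos
  · -- τ₀ = μ₀ a.e. on B; take w = 1_B
    refine ⟨B.indicator fun _ => 1, hmeasB𝒢, ?_, ?_, ?_⟩
    · intro ω; by_cases h : ω ∈ B <;> simp [Set.indicator, h]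
    · rw [hPiB]; exact hpB
    · have : (fun ω => B.indicator (fun _ => (1:ℝ)) ω * τ₀ ω) = B.indicator τ₀ :=
        funext (hindB_mul τ₀)
      rw [this, hIτB, hPiB, ← hmp0, add_zero, mul_div_assoc, div_self hpB.ne', mul_one]
  · -- both positive: mix
    set M : ℝ := mp + mm with hM_def
    have hM : 0 < M := by positivity
    refine ⟨fun ω => (mp * A.indicator (fun _ => 1) ω + mm * B.indicator (fun _ => 1) ω) / M,
      ?_, ?_, ?_, ?_⟩
    · exact (((@measurable_const ℝ Ω _ 𝒢 mp).mul hmeasA𝒢).add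
        ((@measurable_const ℝ Ω _ 𝒢 mm).mul hmeasB𝒢)).div (@measurable_const ℝ Ω _ 𝒢 M)
    · intro ω
      have hAB : ω ∈ A ∨ ω ∈ B := by
        rcases le_total (τ₀ ω) μ₀ with h | h
        · exact Or.inl h
        · exact Or.inr h
      constructor
      · apply div_nonneg _ hM.le
        have h1 : (0:ℝ) ≤ A.indicator (fun _ => (1:ℝ)) ω := by
          by_cases h : ω ∈ A <;> simp [Set.indicator, h]
        have h2 : (0:ℝ) ≤ B.indicator (fun _ => (1:ℝ)) ω := by
          by_cases h : ω ∈ B <;> simp [Set.indicator, h]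
        positivity
      · rw [div_le_one hM]
        by_cases h1 : ω ∈ A <;> by_cases h2 : ω ∈ B <;>
          simp [Set.indicator, h1, h2, hM_def] <;> linarith
    · have hden : ∫ ω, (mp * A.indicator (fun _ => (1:ℝ)) ω
          + mm * B.indicator (fun _ => (1:ℝ)) ω) / M ∂P = (mp * pA + mm * pB) / M := by
        rw [integral_div, integral_add (hiA.const_mul mp) (hiB.const_mul mm),
          integral_const_mul, integral_const_mul, hPiA, hPiB]
      rw [hden]; positivity
    · have hden : ∫ ω, (mp * A.indicator (fun _ => (1:ℝ)) ω
          + mm * B.indicator (fun _ => (1:ℝ)) ω) / M ∂P = (mp * pA + mm * pB) / M := by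
        rw [integral_div, integral_add (hiA.const_mul mp) (hiB.const_mul mm),
          integral_const_mul, integral_const_mul, hPiA, hPiB]
      have hnum : (fun ω => ((mp * A.indicator (fun _ => (1:ℝ)) ω
          + mm * B.indicator (fun _ => (1:ℝ)) ω) / M) * τ₀ ω)
          = fun ω => (mp * A.indicator τ₀ ω + mm * B.indicator τ₀ ω) / M := by
        funext ω
        rw [div_mul_eq_mul_div, add_mul, mul_assoc, mul_assoc, hindA_mul, hindB_mul]
      rw [hnum, integral_div, integral_add (hiτA.const_mul mp) (hiτB.const_mul mm),
        integral_const_mul, integral_const_mul, hIτA, hIτB, hden]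
      have hkey : mp * (μ₀ * pA - mm) + mm * (μ₀ * pB + mp)
          = μ₀ * (mp * pA + mm * pB) := by ring
      rw [hkey, mul_div_assoc]
      exact mul_div_cancel_right₀ μ₀
        (ne_of_gt (by positivity : (0:ℝ) < (mp * pA + mm * pB) / M))

/-- **Theorem 2** (Existence of a causal representation for a given CATE function).
With `μ₀ := E[a·τ₀]/E[a]`, a weight function `w` with `E[w·τ₀]/E[w] = μ₀` exists
if and only if `P(τ₀ ≤ μ₀) > 0` and `P(τ₀ ≥ μ₀) > 0`. -/
theorem existence_causal_representation_given_tau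
    {Ω : Type*} {mΩ : MeasurableSpace Ω} (P : Measure Ω) [IsProbabilityMeasure P]
    (𝒢 : MeasurableSpace Ω) (h𝒢 : 𝒢 ≤ mΩ)
    (a τ₀ : Ω → ℝ)
    (ha_meas : Measurable[𝒢] a) (hτ_meas : Measurable[𝒢] τ₀)
    (ha_L2 : MemLp a 2 P) (hτ_L2 : MemLp τ₀ 2 P)
    (ha_pos : 0 < ∫ ω, a ω ∂P)
    (μ₀ : ℝ) (hμ₀ : μ₀ = (∫ ω, a ω * τ₀ ω ∂P) / (∫ ω, a ω ∂P)) :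
    (∃ w : Ω → ℝ, Measurable[𝒢] w ∧ (∀ ω, 0 ≤ w ω ∧ w ω ≤ 1) ∧ (0 < ∫ ω, w ω ∂P) ∧
      (∫ ω, w ω * τ₀ ω ∂P) / (∫ ω, w ω ∂P) = μ₀)
    ↔ (0 < P {ω | τ₀ ω ≤ μ₀} ∧ 0 < P {ω | μ₀ ≤ τ₀ ω}) := by
  classical
  have hτm : Measurable[mΩ] τ₀ := hτ_meas.mono h𝒢 le_rfl
  have hτ_int : Integrable τ₀ P := hτ_L2.integrable one_le_two
  set A : Set Ω := {ω | τ₀ ω ≤ μ₀} with hA_def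
  set B : Set Ω := {ω | μ₀ ≤ τ₀ ω} with hB_def
  have hA𝒢 : MeasurableSet[𝒢] A := hτ_meas measurableSet_Iic
  have hB𝒢 : MeasurableSet[𝒢] B := hτ_meas measurableSet_Ici
  have hA : MeasurableSet[mΩ] A := h𝒢 _ hA𝒢
  have hB : MeasurableSet[mΩ] B := h𝒢 _ hB𝒢
  constructor
  · rintro ⟨w, hw𝒢, hw01, hwpos, hwμ⟩
    have hwm : Measurable[mΩ] w := hw𝒢.mono h𝒢 le_rfl
    have hw_int : Integrable w P := by
      refine (integrable_const (1:ℝ)).mono' hwm.aestronglyMeasurable (ae_of_all _ fun ω => ?_)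
      rw [Real.norm_eq_abs, abs_of_nonneg (hw01 ω).1]
      exact (hw01 ω).2
    have hwτ_int : Integrable (fun ω => w ω * τ₀ ω) P :=
      hτ_int.bdd_mul (c := 1) hwm.aestronglyMeasurable (ae_of_all _ fun ω => by
        rw [Real.norm_eq_abs, abs_of_nonneg (hw01 ω).1]; exact (hw01 ω).2)
    have hkey : ∫ ω, w ω * (τ₀ ω - μ₀) ∂P = 0 := by
      have h1 : ∫ ω, w ω * τ₀ ω ∂P = μ₀ * ∫ ω, w ω ∂P := by
        field_simp at hwμ
        linarith [hwμ]
      have : ∫ ω, w ω * (τ₀ ω - μ₀) ∂P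
          = (∫ ω, w ω * τ₀ ω ∂P) - μ₀ * ∫ ω, w ω ∂P := by
        rw [show (fun ω => w ω * (τ₀ ω - μ₀)) = fun ω => w ω * τ₀ ω - μ₀ * w ω by
          funext ω; ring]
        rw [integral_sub hwτ_int (hw_int.const_mul μ₀), integral_const_mul]
      rw [this, h1, sub_self]
    refine ⟨aux_pos_measure_le P τ₀ w hτm hwm hτ_int hw01 hwpos μ₀ hkey, ?_⟩
    -- symmetric: apply the aux lemma to -τ₀ and -μ₀
    have hkey' : ∫ ω, w ω * ((-τ₀) ω - (-μ₀)) ∂P = 0 := by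
      rw [show (fun ω => w ω * ((-τ₀) ω - (-μ₀))) = fun ω => -(w ω * (τ₀ ω - μ₀)) by
        funext ω; simp; ring]
      rw [integral_neg, hkey, neg_zero]
    have := aux_pos_measure_le P (-τ₀) w hτm.neg hwm hτ_int.neg hw01 hwpos (-μ₀) hkey'
    convert this using 2
    ext ω; simp [hB_def]
  · rintro ⟨hPA, hPB⟩
    exact aux_construct (mΩ := mΩ) 𝒢 h𝒢 P τ₀ μ₀ hτ_meas hτ_int hPA hPB
end

section
/- Sharp measure of internal validity uniformly in the CATE function (Theorem 3): Let a : Ω → ℝ be 𝒢-measurable with E[a²] < ∞, E[a] > 0, and a_max := essSup(a) < ∞. If a ≥ 0 P-almost surely, then the supremum of E[w] over all weight functions w (𝒢-measurable, 0 ≤ w ≤ 1 pointwise, E[w] > 0) satisfying E[a·τ]/E[a] = E[w·τ]/E[w] for every 𝒢-measurable τ with E[τ²] < ∞, equals E[a]/a_max, and this supremum is attained by w = a/a_max. If P(a < 0) > 0, then no such weight function exists. -/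
open MeasureTheory

private lemma mul_int {Ω : Type*} {mΩ : MeasurableSpace Ω} {P : Measure Ω}
    [IsFiniteMeasure P]
    {f g : Ω → ℝ} (hf : MemLp f 2 P) (hg : MemLp g 2 P) :
    Integrable (fun ω => f ω * g ω) P := by
  have h : MemLp (f • g) 1 P :=
    hg.smul hf
  exact h.integrable le_rfl

private lemma repr_ae_eq {Ω : Type*} {mΩ : MeasurableSpace Ω} (P : Measure Ω)
    [IsProbabilityMeasure P] (𝒢 : MeasurableSpace Ω) (h𝒢 : 𝒢 ≤ mΩ)
    {a w : Ω → ℝ} (ha_meas : Measurable[𝒢] a) (ha_L2 : MemLp a 2 P)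
    (ha_pos : 0 < ∫ ω, a ω ∂P)
    (hw_meas : Measurable[𝒢] w) (hw01 : ∀ ω, 0 ≤ w ω ∧ w ω ≤ 1)
    (hw_pos : 0 < ∫ ω, w ω ∂P)
    (hrep : ∀ τ : Ω → ℝ, Measurable[𝒢] τ → MemLp τ 2 P →
      (∫ ω, a ω * τ ω ∂P) / (∫ ω, a ω ∂P) = (∫ ω, w ω * τ ω ∂P) / (∫ ω, w ω ∂P)) :
    (fun ω => a ω / ∫ ω', a ω' ∂P) =ᵐ[P] (fun ω => w ω / ∫ ω', w ω' ∂P) := by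
  set Ia := ∫ ω', a ω' ∂P with hIa
  set Iw := ∫ ω', w ω' ∂P with hIw
  have hw_meas' : Measurable[mΩ] w := hw_meas.mono h𝒢 le_rfl
  have hw_L2 : MemLp w 2 P := by
    refine MemLp.of_bound hw_meas'.aestronglyMeasurable 1 ?_
    filter_upwards with ω
    rw [Real.norm_eq_abs, abs_le]
    exact ⟨by linarith [(hw01 ω).1], (hw01 ω).2⟩
  set g : Ω → ℝ := fun ω => a ω / Ia - w ω / Iw with hg
  have hg_meas : Measurable[𝒢] g := (ha_meas.div_const _).sub (hw_meas.div_const _)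
  have hg_L2 : MemLp g 2 P := by
    have h1 : MemLp (fun ω => a ω / Ia) 2 P := by
      simpa [div_eq_inv_mul] using ha_L2.const_mul Ia⁻¹
    have h2 : MemLp (fun ω => w ω / Iw) 2 P := by
      simpa [div_eq_inv_mul] using hw_L2.const_mul Iw⁻¹
    exact h1.sub h2
  have hag : Integrable (fun ω => a ω * g ω) P := mul_int ha_L2 hg_L2
  have hwg : Integrable (fun ω => w ω * g ω) P := mul_int hw_L2 hg_L2
  have hkey := hrep g hg_meas hg_L2
  have hsq : ∫ ω, g ω * g ω ∂P
      = (∫ ω, a ω * g ω ∂P) / Ia - (∫ ω, w ω * g ω ∂P) / Iw := by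
    rw [← integral_div, ← integral_div, ← integral_sub (hag.div_const _) (hwg.div_const _)]
    congr 1; funext ω; simp only [hg]; ring
  have hz : ∫ ω, g ω * g ω ∂P = 0 := by rw [hsq, hkey, sub_self]
  have hg0 : (fun ω => g ω * g ω) =ᵐ[P] 0 := by
    refine (integral_eq_zero_iff_of_nonneg (fun ω => mul_self_nonneg _) ?_).1 hz
    exact mul_int hg_L2 hg_L2
  filter_upwards [hg0] with ω hω
  have hgz : g ω = 0 := by
    have h0 : g ω * g ω = 0 := hω
    exact mul_self_eq_zero.mp h0
  have := sub_eq_zero.mp hgz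
  simpa using this

/-- **Theorem 3** (Sharp measure of internal validity uniformly in the CATE function).
If `a ≥ 0` a.s., the supremum of `E[w]` over weight functions `w` representing the
weighted estimand uniformly in `τ` equals `E[a]/a_max` and is attained by `w = a/a_max`;
if `P(a < 0) > 0`, no representing weight function exists. -/
theorem internal_validity_uniform
    {Ω : Type*} {mΩ : MeasurableSpace Ω} (P : Measure Ω) [IsProbabilityMeasure P]
    (𝒢 : MeasurableSpace Ω) (h𝒢 : 𝒢 ≤ mΩ)
    (a : Ω → ℝ)
    (ha_meas : Measurable[𝒢] a)
    (ha_L2 : MemLp a 2 P)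
    (ha_pos : 0 < ∫ ω, a ω ∂P)
    (ha_bdd : ∃ C : ℝ, ∀ᵐ ω ∂P, a ω ≤ C)
    (a_max : ℝ) (ha_max : a_max = essSup a P) :
    ((∀ᵐ ω ∂P, 0 ≤ a ω) →
      -- the supremum is attained by (a version of) `w = a / a_max` ...
      (∃ w : Ω → ℝ, Measurable[𝒢] w ∧ (∀ ω, 0 ≤ w ω ∧ w ω ≤ 1) ∧ (0 < ∫ ω, w ω ∂P) ∧
        (∀ τ : Ω → ℝ, Measurable[𝒢] τ → MemLp τ 2 P →
          (∫ ω, a ω * τ ω ∂P) / (∫ ω, a ω ∂P) = (∫ ω, w ω * τ ω ∂P) / (∫ ω, w ω ∂P)) ∧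
        (w =ᵐ[P] fun ω => a ω / a_max) ∧
        (∫ ω, w ω ∂P) = (∫ ω, a ω ∂P) / a_max) ∧
      -- ... and `E[a]/a_max` is an upper bound for `E[w]` over all representing weights
      (∀ w : Ω → ℝ, Measurable[𝒢] w → (∀ ω, 0 ≤ w ω ∧ w ω ≤ 1) → (0 < ∫ ω, w ω ∂P) →
        (∀ τ : Ω → ℝ, Measurable[𝒢] τ → MemLp τ 2 P →
          (∫ ω, a ω * τ ω ∂P) / (∫ ω, a ω ∂P) = (∫ ω, w ω * τ ω ∂P) / (∫ ω, w ω ∂P)) →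
        (∫ ω, w ω ∂P) ≤ (∫ ω, a ω ∂P) / a_max))
    ∧
    (0 < P {ω | a ω < 0} →
      ¬ (∃ w : Ω → ℝ, Measurable[𝒢] w ∧ (∀ ω, 0 ≤ w ω ∧ w ω ≤ 1) ∧ (0 < ∫ ω, w ω ∂P) ∧
        ∀ τ : Ω → ℝ, Measurable[𝒢] τ → MemLp τ 2 P →
          (∫ ω, a ω * τ ω ∂P) / (∫ ω, a ω ∂P) = (∫ ω, w ω * τ ω ∂P) / (∫ ω, w ω ∂P))) := by
  have ha_int : Integrable a P := ha_L2.integrable one_le_two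
  have hbddU : Filter.IsBoundedUnder (· ≤ ·) (ae P) a := by
    obtain ⟨C, hC⟩ := ha_bdd
    exact ⟨C, Filter.eventually_map.2 hC⟩
  have hle_max : ∀ᵐ ω ∂P, a ω ≤ a_max := by
    rw [ha_max]; exact ae_le_essSup hbddU
  have h_amax_pos : 0 < a_max := by
    have h1 : (∫ ω, a ω ∂P) ≤ ∫ _ω, a_max ∂P :=
      integral_mono_ae ha_int (integrable_const _) hle_max
    have h2 : ∫ _ω : Ω, a_max ∂P = a_max := by simp
    linarith
  constructor
  · intro ha_nn
    constructor
    · -- attainment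
      have hae : (fun ω => max 0 (min (a ω / a_max) 1)) =ᵐ[P] fun ω => a ω / a_max := by
        filter_upwards [ha_nn, hle_max] with ω h0 h1
        have h0' : 0 ≤ a ω / a_max := div_nonneg h0 h_amax_pos.le
        have h1' : a ω / a_max ≤ 1 := (div_le_one h_amax_pos).2 h1
        rw [min_eq_left h1', max_eq_right h0']
      have hint : (∫ ω, max 0 (min (a ω / a_max) 1) ∂P) = (∫ ω, a ω ∂P) / a_max := by
        rw [integral_congr_ae hae, integral_div]
      refine ⟨fun ω => max 0 (min (a ω / a_max) 1), ?_, ?_, ?_, ?_, hae, hint⟩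
      · exact measurable_const.max ((ha_meas.div_const _).min measurable_const)
      · intro ω
        exact ⟨le_max_left _ _, max_le (by norm_num) (min_le_right _ _)⟩
      · rw [hint]; exact div_pos ha_pos h_amax_pos
      · intro τ hτm hτL2
        have hmul : (fun ω => max 0 (min (a ω / a_max) 1) * τ ω)
            =ᵐ[P] fun ω => a ω * τ ω / a_max := by
          filter_upwards [hae] with ω hω
          rw [hω]; ring
        rw [integral_congr_ae hmul, integral_div, hint,
          div_div_div_comm, div_self h_amax_pos.ne', div_one]
    · -- upper bound
      intro w hw_meas hw01 hw_pos hrep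
      have hae := repr_ae_eq P 𝒢 h𝒢 ha_meas ha_L2 ha_pos hw_meas hw01 hw_pos hrep
      set Ia := ∫ ω', a ω' ∂P with hIa
      set Iw := ∫ ω', w ω' ∂P with hIw
      have hub : ∀ᵐ ω ∂P, a ω ≤ Ia / Iw := by
        filter_upwards [hae] with ω hω
        have key : a ω = w ω / Iw * Ia := by
          rw [← hω, div_mul_cancel₀ _ ha_pos.ne']
        calc a ω = w ω / Iw * Ia := key
          _ ≤ 1 / Iw * Ia := by
              have h1 : w ω / Iw ≤ 1 / Iw := by
                gcongr
                exact (hw01 ω).2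
              exact mul_le_mul_of_nonneg_right h1 ha_pos.le
          _ = Ia / Iw := by ring
      have hess : a_max ≤ Ia / Iw := by
        rw [ha_max]
        haveI : (ae P).NeBot := ae_neBot.2 (IsProbabilityMeasure.ne_zero P)
        exact Filter.limsup_le_of_le
          (Filter.isCoboundedUnder_le_of_eventually_le _ ha_nn) hub
      have hmul : a_max * Iw ≤ Ia := by
        rw [← le_div_iff₀ hw_pos]; exact hess
      calc Iw = a_max * Iw / a_max := by
            rw [mul_comm, mul_div_assoc, div_self h_amax_pos.ne', mul_one]
        _ ≤ Ia / a_max := by gcongr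
  · rintro hneg ⟨w, hw_meas, hw01, hw_pos, hrep⟩
    have hae := repr_ae_eq P 𝒢 h𝒢 ha_meas ha_L2 ha_pos hw_meas hw01 hw_pos hrep
    have hnn : ∀ᵐ ω ∂P, 0 ≤ a ω := by
      filter_upwards [hae] with ω hω
      have key : a ω = w ω / (∫ ω', w ω' ∂P) * (∫ ω', a ω' ∂P) := by
        rw [← hω, div_mul_cancel₀ _ ha_pos.ne']
      rw [key]
      exact mul_nonneg (div_nonneg (hw01 ω).1 hw_pos.le) ha_pos.le
    have hset : {ω | a ω < 0} = {ω | ¬ 0 ≤ a ω} := by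
      ext ω; simp [not_le]
    have hzero : P {ω | a ω < 0} = 0 := by
      rw [hset]; exact hnn
    exact absurd hzero hneg.ne'
end

section
/- Causal representation under linear CATEs (Proposition 4): Let X : Ω → ℝ^d be a random vector taking finitely many values, with support S := {x ∈ ℝ^d : P(X = x) > 0}, and let a : ℝ^d → ℝ satisfy E[a(X)] > 0. Then there exists w : ℝ^d → [0,1] with E[w(X)] > 0 such that E[a(X)·(c + d·X)]/E[a(X)] = E[w(X)·(c + d·X)]/E[w(X)] for every c ∈ ℝ and d ∈ ℝ^d, if and only if the vector E[a(X)·X]/E[a(X)] lies in the convex hull of S. -/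
open MeasureTheory

lemma integral_comp_fin {Ω : Type*} {mΩ : MeasurableSpace Ω} (P : Measure Ω) [IsFiniteMeasure P]
    {α : Type*} [MeasurableSpace α] [MeasurableSingletonClass α]
    {E : Type*} [NormedAddCommGroup E] [NormedSpace ℝ E] [CompleteSpace E]
    (X : Ω → α) (hX : Measurable X) (hfin : (Set.range X).Finite) (f : α → E) :
    ∫ ω, f (X ω) ∂P = ∑ x ∈ hfin.toFinset, (P (X ⁻¹' {x})).toReal • f x := by
  have hrepr : ∀ ω, f (X ω) = ∑ x ∈ hfin.toFinset,
      Set.indicator (X ⁻¹' {x}) (fun _ => f x) ω := by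
    intro ω
    rw [Finset.sum_eq_single_of_mem (X ω)
      (by simp [Set.Finite.mem_toFinset])]
    · simp
    · intro b _ hb
      apply Set.indicator_of_notMem
      simp only [Set.mem_preimage, Set.mem_singleton_iff]; exact fun h => hb h.symm
  simp_rw [hrepr]
  rw [integral_finset_sum]
  · refine Finset.sum_congr rfl fun x _ => ?_
    rw [integral_indicator_const _ (hX (measurableSet_singleton x))]
    rfl
  · intro x _
    exact (integrable_const (f x)).indicator (hX (measurableSet_singleton x))

/-- **Proposition 4** (Causal representation under linear CATEs).
For a finitely supported covariate `X : Ω → ℝ^d` and a weight function `a` with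
`E[a(X)] > 0`, there exists `w : ℝ^d → [0,1]` with `E[w(X)] > 0` matching the weighted
estimand on all affine CATE functions `x ↦ c + d·x` if and only if
`E[a(X)·X]/E[a(X)]` lies in the convex hull of the support of `X`. -/
theorem causal_representation_linear_CATEs
    {Ω : Type*} {mΩ : MeasurableSpace Ω} (P : Measure Ω) [IsProbabilityMeasure P]
    {d : ℕ} (X : Ω → (Fin d → ℝ))
    (hX_meas : Measurable X)
    (hX_fin : (Set.range X).Finite)
    (a : (Fin d → ℝ) → ℝ)
    (ha_pos : 0 < ∫ ω, a (X ω) ∂P) :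
    (∃ w : (Fin d → ℝ) → ℝ, (∀ x, 0 ≤ w x ∧ w x ≤ 1) ∧ (0 < ∫ ω, w (X ω) ∂P) ∧
      ∀ (c : ℝ) (dv : Fin d → ℝ),
        (∫ ω, a (X ω) * (c + ∑ i, dv i * X ω i) ∂P) / (∫ ω, a (X ω) ∂P) =
        (∫ ω, w (X ω) * (c + ∑ i, dv i * X ω i) ∂P) / (∫ ω, w (X ω) ∂P))
    ↔ (∫ ω, a (X ω) ∂P)⁻¹ • (∫ ω, a (X ω) • X ω ∂P) ∈
        convexHull ℝ {x : Fin d → ℝ | 0 < P (X ⁻¹' {x})} := by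
  classical
  set S' := hX_fin.toFinset with hS'def
  set p : (Fin d → ℝ) → ℝ := fun x => (P (X ⁻¹' {x})).toReal with hpdef
  have hint : ∀ f : (Fin d → ℝ) → ℝ, ∫ ω, f (X ω) ∂P = ∑ x ∈ S', p x * f x := by
    intro f
    simpa [smul_eq_mul] using integral_comp_fin P X hX_meas hX_fin f
  have hintv : ∫ ω, a (X ω) • X ω ∂P = ∑ x ∈ S', p x • (a x • x) :=
    integral_comp_fin P X hX_meas hX_fin (fun x => a x • x)
  have hp0 : ∀ x, 0 ≤ p x := fun x => ENNReal.toReal_nonneg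
  have hppos : ∀ x : Fin d → ℝ, 0 < P (X ⁻¹' {x}) ↔ 0 < p x := by
    intro x
    rw [hpdef]
    simp only
    rw [ENNReal.toReal_pos_iff]
    exact ⟨fun h => ⟨h, measure_lt_top P _⟩, fun h => h.1⟩
  -- key expansion of affine sums
  have key : ∀ (b : (Fin d → ℝ) → ℝ) (c : ℝ) (dv : Fin d → ℝ),
      ∑ x ∈ S', p x * (b x * (c + ∑ i, dv i * x i))
        = (∑ x ∈ S', p x * b x) * c + ∑ i, dv i * ∑ x ∈ S', p x * b x * x i := by
    intro b c dv
    have h1 : ∀ x ∈ S', p x * (b x * (c + ∑ i, dv i * x i))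
        = p x * b x * c + ∑ i, dv i * (p x * b x * x i) := by
      intro x _
      have h2 : (∑ i, dv i * (p x * b x * x i)) = (p x * b x) * ∑ i, dv i * x i := by
        rw [Finset.mul_sum]
        exact Finset.sum_congr rfl fun i _ => by ring
      rw [h2]; ring
    rw [Finset.sum_congr rfl h1, Finset.sum_add_distrib, ← Finset.sum_mul, Finset.sum_comm]
    congr 1
    exact Finset.sum_congr rfl fun i _ => (Finset.mul_sum _ _ _).symm
  have hA : ∫ ω, a (X ω) ∂P = ∑ x ∈ S', p x * a x := hint a
  set A : ℝ := ∫ ω, a (X ω) ∂P with hAdef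
  have hAne : A ≠ 0 := ne_of_gt ha_pos
  -- coordinates of the vector integral
  have hMa : ∀ i, (∫ ω, a (X ω) • X ω ∂P) i = ∑ x ∈ S', p x * a x * x i := by
    intro i
    rw [hintv]
    simp [Finset.sum_apply, smul_eq_mul, mul_assoc]
  have hint_affine : ∀ (b : (Fin d → ℝ) → ℝ) (c : ℝ) (dv : Fin d → ℝ),
      ∫ ω, b (X ω) * (c + ∑ i, dv i * X ω i) ∂P
        = (∑ x ∈ S', p x * b x) * c + ∑ i, dv i * ∑ x ∈ S', p x * b x * x i := by
    intro b c dv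
    rw [hint (fun x => b x * (c + ∑ i, dv i * x i)), key]
  set ν : Fin d → ℝ := A⁻¹ • (∫ ω, a (X ω) • X ω ∂P) with hνdef
  have hν : ∀ i, ν i = (∑ x ∈ S', p x * a x * x i) / A := by
    intro i
    rw [hνdef]
    simp [hMa i, div_eq_inv_mul]
  constructor
  · rintro ⟨w, hw01, hWpos, heq⟩
    have hW : ∫ ω, w (X ω) ∂P = ∑ x ∈ S', p x * w x := hint w
    set W : ℝ := ∫ ω, w (X ω) ∂P with hWdef
    have hWne : W ≠ 0 := ne_of_gt hWpos
    -- coordinatewise equality of the two means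
    have hcoord : ∀ j, ν j = (∑ x ∈ S', p x * w x * x j) / W := by
      intro j
      have := heq 0 (Pi.single j 1)
      rw [hint_affine a, hint_affine w] at this
      simp only [mul_zero, zero_add] at this
      have hsingle : ∀ (g : Fin d → ℝ),
          (∑ i, (Pi.single j 1 : Fin d → ℝ) i * g i) = g j := by
        intro g
        rw [Finset.sum_eq_single_of_mem j (Finset.mem_univ j)]
        · simp
        · intro b _ hb; simp [Pi.single_apply, hb]
      rw [hsingle, hsingle] at this
      rw [hν j]
      exact this
    -- ν is the center of mass with weights p x * w x
    have hq0 : ∀ x ∈ S', 0 ≤ p x * w x := fun x _ => mul_nonneg (hp0 x) (hw01 x).1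
    have hqsum : 0 < ∑ x ∈ S', p x * w x := by rw [← hW]; exact hWpos
    have hcm : S'.centerMass (fun x => p x * w x) id = ν := by
      funext j
      rw [Finset.centerMass]
      simp only [Pi.smul_apply, smul_eq_mul, Finset.sum_apply, id]
      rw [hcoord j, hW, div_eq_inv_mul]
    rw [← hcm, ← Finset.centerMass_filter_ne_zero]
    apply Finset.centerMass_mem_convexHull
    · intro x hx; exact hq0 x (Finset.mem_filter.mp hx).1
    · rw [Finset.sum_filter_ne_zero]; exact hqsum
    · intro x hx
      obtain ⟨hxS, hxne⟩ := Finset.mem_filter.mp hx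
      have hpx : 0 < p x := by
        rcases lt_of_le_of_ne (hp0 x) (fun h => hxne (by rw [← h, zero_mul])) with h
        exact h
      exact Set.mem_setOf_eq ▸ (hppos x).mpr hpx
  · intro hmem
    -- the support as a finset
    set T : Finset (Fin d → ℝ) := S'.filter (fun x => 0 < p x) with hTdef
    have hTset : {x : Fin d → ℝ | 0 < P (X ⁻¹' {x})} = ↑T := by
      ext x
      simp only [Set.mem_setOf_eq, hTdef, Finset.coe_filter, Set.mem_setOf_eq]
      constructor
      · intro hx
        refine ⟨?_, (hppos x).mp hx⟩
        obtain ⟨ω, hω⟩ := nonempty_of_measure_ne_zero (ne_of_gt hx)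
        rw [hS'def, Set.Finite.mem_toFinset]
        exact ⟨ω, hω⟩
      · rintro ⟨-, h⟩
        exact (hppos x).mpr h
    rw [hTset] at hmem
    rw [Finset.convexHull_eq] at hmem
    obtain ⟨t, ht0, ht1, htc⟩ := hmem
    have hTsub : T ⊆ S' := Finset.filter_subset _ _
    have hTpos : ∀ x ∈ T, 0 < p x := fun x hx => (Finset.mem_filter.mp hx).2
    have hTne : T.Nonempty := by
      by_contra h
      rw [Finset.not_nonempty_iff_eq_empty] at h
      rw [h, Finset.sum_empty] at ht1
      exact one_ne_zero ht1.symm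
    set m : ℝ := T.inf' hTne p with hmdef
    have hm_pos : 0 < m := (Finset.lt_inf'_iff hTne).mpr hTpos
    set w : (Fin d → ℝ) → ℝ := fun x => if x ∈ T then m * t x / p x else 0 with hwdef
    have hw01 : ∀ x, 0 ≤ w x ∧ w x ≤ 1 := by
      intro x
      by_cases hx : x ∈ T
      · simp only [hwdef, if_pos hx]
        have hpx := hTpos x hx
        have htx0 := ht0 x hx
        have htx1 : t x ≤ 1 := by
          rw [← ht1]
          exact Finset.single_le_sum (fun y hy => ht0 y hy) hx
        constructor
        · exact div_nonneg (mul_nonneg hm_pos.le htx0) hpx.le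
        · rw [div_le_one hpx]
          calc m * t x ≤ p x * 1 :=
                mul_le_mul (Finset.inf'_le p hx) htx1 htx0 hpx.le
            _ = p x := mul_one _
      · simp [hwdef, if_neg hx]
    have hW : ∫ ω, w (X ω) ∂P = m := by
      rw [hint w]
      rw [← Finset.sum_subset hTsub (fun x _ hxT => by simp [hwdef, if_neg hxT])]
      have hcong : ∀ x ∈ T, p x * w x = m * t x := by
        intro x hx
        rw [hwdef]
        simp only [if_pos hx]
        rw [mul_comm, div_mul_cancel₀ _ (ne_of_gt (hTpos x hx))]
      rw [Finset.sum_congr rfl hcong, ← Finset.mul_sum, ht1, mul_one]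
    have hνsum : ∀ i, ∑ x ∈ T, t x * x i = ν i := by
      intro i
      have h := congrFun htc i
      rw [Finset.centerMass, ht1] at h
      simpa using h
    have hMw : ∀ i, ∑ x ∈ S', p x * w x * x i = m * ν i := by
      intro i
      rw [← Finset.sum_subset hTsub (fun x _ hxT => by simp [hwdef, if_neg hxT])]
      rw [← hνsum i, Finset.mul_sum]
      refine Finset.sum_congr rfl fun x hx => ?_
      have hpne : p x ≠ 0 := ne_of_gt (hTpos x hx)
      rw [hwdef]
      simp only [if_pos hx]
      field_simp
    have hsumw : ∑ x ∈ S', p x * w x = m := by rw [← hint w]; exact hW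
    have hMa2 : ∀ i, ∑ x ∈ S', p x * a x * x i = A * ν i := by
      intro i
      have h := (hν i).symm
      rw [div_eq_iff hAne] at h
      rw [h, mul_comm]
    refine ⟨w, hw01, by rw [hW]; exact hm_pos, ?_⟩
    intro c dv
    rw [hint_affine a, hint_affine w, hW, ← hA, hsumw]
    simp_rw [hMa2, hMw]
    have hfac : ∀ B : ℝ, B * c + ∑ i, dv i * (B * ν i) = B * (c + ∑ i, dv i * ν i) := by
      intro B
      rw [mul_add, Finset.mul_sum]
      congr 1
      exact Finset.sum_congr rfl fun i _ => by ring
    rw [hfac A, hfac m, mul_div_cancel_left₀ _ hAne,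
      mul_div_cancel_left₀ _ (ne_of_gt hm_pos)]
end

section
/- TWFE decomposition into group-time average treatment effects under parallel trends (Proposition 8, following de Chaisemartin and D'Haultfœuille 2020): Under the staggered adoption panel setting and the parallel trends assumption, Σ_{t=1}^T E[D̈_t·Y_t] = Σ_{t=1}^T Σ_{g=2}^{min(t,T)} a(g,t)·τ(g,t)·P(G = g) and Σ_{t=1}^T E[D̈_t²] = Σ_{t=1}^T Σ_{g=2}^{min(t,T)} a(g,t)·P(G = g), where a(g,t) := 1 − (T − g + 1)/T − F(t) + (1/T)·Σ_{s=1}^T F(s) and τ(g,t) := E[Y_t(1) − Y_t(0) | G = g]. Consequently the two-way fixed effects estimand β_TWFE := (Σ_t E[D̈_t·Y_t])/(Σ_t E[D̈_t²]) is the a(g,t)-weighted average of the group-time average treatment effects τ(g,t) over treated cells g ≤ t. -/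
open MeasureTheory
open scoped ENNReal

/-- **Proposition 8** (TWFE decomposition into group-time average treatment effects under
parallel trends, following de Chaisemartin and D'Haultfœuille 2020). In the staggered
adoption panel under parallel trends, `Σ_t E[D̈_t·Y_t]` and `Σ_t E[D̈_t²]` decompose into
sums of `a(g,t)·τ(g,t)·P(G = g)` and `a(g,t)·P(G = g)` over treated cells `g ≤ t`, so the
TWFE estimand is the `a(g,t)`-weighted average of the group-time ATTs `τ(g,t)`. -/
theorem twfe_decomposition_group_time
    {Ω : Type*} {mΩ : MeasurableSpace Ω} (P : Measure Ω) [IsProbabilityMeasure P]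
    (T : ℕ) (hT : 2 ≤ T)
    (G : Ω → ℕ∞) (hG_meas : Measurable G)
    (hG_range : ∀ ω, G ω = ⊤ ∨ (2 ≤ G ω ∧ G ω ≤ (T : ℕ∞)))
    (hG_top : 0 < P {ω | G ω = ⊤})
    (hG_pos : ∀ g : ℕ, 2 ≤ g → g ≤ T → 0 < P {ω | G ω = (g : ℕ∞)})
    (Y0 Y1 : ℕ → Ω → ℝ)
    (hY0_int : ∀ t ∈ Finset.Icc 1 T, Integrable (Y0 t) P)
    (hY1_int : ∀ t ∈ Finset.Icc 1 T, Integrable (Y1 t) P)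
    (hY0_meas : ∀ t ∈ Finset.Icc 1 T, Measurable (Y0 t))
    (hY1_meas : ∀ t ∈ Finset.Icc 1 T, Measurable (Y1 t))
    (D : ℕ → Ω → ℝ) (hD : ∀ t ω, D t ω = if G ω ≤ (t : ℕ∞) then 1 else 0)
    (Yobs : ℕ → Ω → ℝ) (hYobs : ∀ t ω, Yobs t ω = D t ω * Y1 t ω + (1 - D t ω) * Y0 t ω)
    (F : ℕ → ℝ) (hF : ∀ t, F t = (P {ω | G ω ≤ (t : ℕ∞)}).toReal)
    (Ddd : ℕ → Ω → ℝ)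
    (hDdd : ∀ t ω, Ddd t ω = D t ω - (1 / (T : ℝ)) * ∑ s ∈ Finset.Icc 1 T, D s ω
      - F t + (1 / (T : ℝ)) * ∑ s ∈ Finset.Icc 1 T, F s)
    -- parallel trends
    (hPT : ∀ t : ℕ, 2 ≤ t → t ≤ T →
      ∀ g g' : ℕ∞, (g = ⊤ ∨ (2 ≤ g ∧ g ≤ (T : ℕ∞))) → (g' = ⊤ ∨ (2 ≤ g' ∧ g' ≤ (T : ℕ∞))) →
        (∫ ω in {ω | G ω = g}, (Y0 t ω - Y0 (t - 1) ω) ∂P) / (P {ω | G ω = g}).toReal =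
        (∫ ω in {ω | G ω = g'}, (Y0 t ω - Y0 (t - 1) ω) ∂P) / (P {ω | G ω = g'}).toReal)
    -- TWFE weights and group-time average treatment effects
    (aw : ℕ → ℕ → ℝ)
    (haw : ∀ g t, aw g t = 1 - ((T : ℝ) - (g : ℝ) + 1) / (T : ℝ) - F t
      + (1 / (T : ℝ)) * ∑ s ∈ Finset.Icc 1 T, F s)
    (τ : ℕ → ℕ → ℝ)
    (hτ : ∀ g t, τ g t = (∫ ω in {ω | G ω = (g : ℕ∞)}, (Y1 t ω - Y0 t ω) ∂P) /
      (P {ω | G ω = (g : ℕ∞)}).toReal) :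
    (∑ t ∈ Finset.Icc 1 T, ∫ ω, Ddd t ω * Yobs t ω ∂P) =
      (∑ t ∈ Finset.Icc 1 T, ∑ g ∈ Finset.Icc 2 (min t T),
        aw g t * τ g t * (P {ω | G ω = (g : ℕ∞)}).toReal) ∧
    (∑ t ∈ Finset.Icc 1 T, ∫ ω, (Ddd t ω) ^ 2 ∂P) =
      (∑ t ∈ Finset.Icc 1 T, ∑ g ∈ Finset.Icc 2 (min t T),
        aw g t * (P {ω | G ω = (g : ℕ∞)}).toReal) ∧
    (∑ t ∈ Finset.Icc 1 T, ∫ ω, Ddd t ω * Yobs t ω ∂P) /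
        (∑ t ∈ Finset.Icc 1 T, ∫ ω, (Ddd t ω) ^ 2 ∂P) =
      (∑ t ∈ Finset.Icc 1 T, ∑ g ∈ Finset.Icc 2 (min t T),
        aw g t * τ g t * (P {ω | G ω = (g : ℕ∞)}).toReal) /
      (∑ t ∈ Finset.Icc 1 T, ∑ g ∈ Finset.Icc 2 (min t T),
        aw g t * (P {ω | G ω = (g : ℕ∞)}).toReal) := by
  classical
  have hTR : (T : ℝ) ≠ 0 := Nat.cast_ne_zero.mpr (by omega)
  -- abbreviations
  obtain ⟨dval, hdval⟩ : ∃ f : ℕ∞ → ℕ → ℝ, ∀ g t, f g t = if g ≤ (t : ℕ∞) then (1:ℝ) else 0 :=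
    ⟨_, fun _ _ => rfl⟩
  obtain ⟨ddval, hddval⟩ : ∃ f : ℕ∞ → ℕ → ℝ, ∀ g t, f g t =
      dval g t - (1 / (T : ℝ)) * ∑ s ∈ Finset.Icc 1 T, dval g s - F t
        + (1 / (T : ℝ)) * ∑ s ∈ Finset.Icc 1 T, F s := ⟨_, fun _ _ => rfl⟩
  obtain ⟨μ, hμ⟩ : ∃ f : ℕ∞ → ℝ, ∀ g, f g = (P {ω | G ω = g}).toReal := ⟨_, fun _ => rfl⟩
  obtain ⟨m, hm⟩ : ∃ f : ℕ∞ → ℕ → ℝ, ∀ g t, f g t = ∫ ω in {ω | G ω = g}, Y0 t ω ∂P :=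
    ⟨_, fun _ _ => rfl⟩
  obtain ⟨τ', hτ'⟩ : ∃ f : ℕ∞ → ℕ → ℝ, ∀ g t, f g t =
      ∫ ω in {ω | G ω = g}, (Y1 t ω - Y0 t ω) ∂P := ⟨_, fun _ _ => rfl⟩
  obtain ⟨δ, hδ⟩ : ∃ f : ℕ → ℝ, ∀ t, f t =
      (∫ ω in {ω | G ω = (⊤ : ℕ∞)}, (Y0 t ω - Y0 (t - 1) ω) ∂P) / (P {ω | G ω = (⊤:ℕ∞)}).toReal :=
    ⟨_, fun _ => rfl⟩
  -- the index set
  set S : Finset ℕ∞ := (Finset.Icc 2 T).image (fun k : ℕ => (k : ℕ∞)) with hS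
  set I : Finset ℕ∞ := insert ⊤ S with hIdef
  have htopS : (⊤ : ℕ∞) ∉ S := by
    simp only [hS, Finset.mem_image]
    rintro ⟨k, -, hk⟩
    exact (WithTop.coe_ne_top hk)
  have hGI : ∀ ω, G ω ∈ I := by
    intro ω
    rcases hG_range ω with h | ⟨h2, hle⟩
    · simp [hIdef, h]
    · have hne : G ω ≠ ⊤ := (hle.trans_lt (WithTop.coe_lt_top T)).ne
      have hfin : ∀ g : ℕ∞, g ≠ ⊤ → 2 ≤ g → g ≤ (T : ℕ∞) →
          ∃ k : ℕ, 2 ≤ k ∧ k ≤ T ∧ g = (k : ℕ∞) := by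
        intro g hne h2 hle
        lift g to ℕ using hne with k hk
        exact ⟨k, by exact_mod_cast h2, by exact_mod_cast hle, rfl⟩
      obtain ⟨k, h2', hle', hk⟩ := hfin _ hne h2 hle
      rw [hk]
      exact Finset.mem_insert_of_mem (Finset.mem_image_of_mem _ (Finset.mem_Icc.mpr ⟨h2', hle'⟩))
  have hIcases : ∀ g ∈ I, g = ⊤ ∨ ∃ k : ℕ, 2 ≤ k ∧ k ≤ T ∧ g = (k : ℕ∞) := by
    intro g hg
    rcases Finset.mem_insert.mp hg with h | h
    · exact Or.inl h
    · obtain ⟨k, hk, rfl⟩ := Finset.mem_image.mp h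
      rw [Finset.mem_Icc] at hk
      exact Or.inr ⟨k, hk.1, hk.2, rfl⟩
  have hImem : ∀ g ∈ I, g = ⊤ ∨ (2 ≤ g ∧ g ≤ (T : ℕ∞)) := by
    intro g hg
    rcases hIcases g hg with h | ⟨k, h2, hle, rfl⟩
    · exact Or.inl h
    · exact Or.inr ⟨by exact_mod_cast h2, by exact_mod_cast hle⟩
  have hμpos : ∀ g ∈ I, 0 < μ g := by
    intro g hg
    rcases hIcases g hg with rfl | ⟨k, h2, hle, rfl⟩
    · rw [hμ]; exact ENNReal.toReal_pos hG_top.ne' (measure_ne_top P _)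
    · rw [hμ]; exact ENNReal.toReal_pos (hG_pos k h2 hle).ne' (measure_ne_top P _)
  -- measurability
  have hAmeas : ∀ g : ℕ∞, MeasurableSet {ω | G ω = g} :=
    fun g => hG_meas (measurableSet_singleton g)
  have hsetle : ∀ t : ℕ, MeasurableSet {ω | G ω ≤ (t : ℕ∞)} :=
    fun t => hG_meas ((Set.to_countable (Set.Iic ((t : ℕ) : ℕ∞))).measurableSet)
  have hDmeas : ∀ t, Measurable (D t) := by
    intro t
    rw [show D t = fun ω => if G ω ≤ (t : ℕ∞) then (1:ℝ) else 0 from funext (hD t)]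
    exact Measurable.ite (hsetle t) measurable_const measurable_const
  have hDbd : ∀ t ω, ‖D t ω‖ ≤ 1 := by
    intro t ω; rw [hD]; split_ifs <;> simp
  have hDint : ∀ t, Integrable (D t) P := by
    intro t
    simpa using (integrable_const (1:ℝ)).bdd_mul (hDmeas t).aestronglyMeasurable (ae_of_all _ (hDbd t))
  have hYobs_int : ∀ t ∈ Finset.Icc 1 T, Integrable (Yobs t) P := by
    intro t ht
    rw [show Yobs t = fun ω => D t ω * Y1 t ω + (1 - D t ω) * Y0 t ω from funext (hYobs t)]
    refine Integrable.add ?_ ?_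
    · exact (hY1_int t ht).bdd_mul (hDmeas t).aestronglyMeasurable (ae_of_all _ (hDbd t))
    · refine (hY0_int t ht).bdd_mul (c := 2) (measurable_const.sub (hDmeas t)).aestronglyMeasurable (ae_of_all _ ?_)
      intro ω; rw [hD]; split_ifs <;> norm_num
  have hDdd_meas : ∀ t, Measurable (Ddd t) := by
    intro t
    rw [show Ddd t = fun ω => D t ω - (1 / (T : ℝ)) * ∑ s ∈ Finset.Icc 1 T, D s ω
      - F t + (1 / (T : ℝ)) * ∑ s ∈ Finset.Icc 1 T, F s from funext (hDdd t)]
    exact (((hDmeas t).sub ((Finset.measurable_sum _ (fun s _ => hDmeas s)).const_mul _)).sub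
      measurable_const).add measurable_const
  have hDdd_eq : ∀ t ω, Ddd t ω = ddval (G ω) t := by
    intro t ω; simp only [hDdd, hddval, hD, hdval]
  have hbd : ∀ t ω, ‖Ddd t ω‖ ≤ ∑ g ∈ I, |ddval g t| := by
    intro t ω
    rw [Real.norm_eq_abs, hDdd_eq]
    exact Finset.single_le_sum (f := fun g => |ddval g t|) (fun i _ => abs_nonneg _) (hGI ω)
  have hDdd_int : ∀ t, Integrable (Ddd t) P := by
    intro t
    simpa using (integrable_const (1:ℝ)).bdd_mul (hDdd_meas t).aestronglyMeasurable (ae_of_all _ (hbd t))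
  have hDY : ∀ t ∈ Finset.Icc 1 T, Integrable (fun ω => Ddd t ω * Yobs t ω) P :=
    fun t ht => (hYobs_int t ht).bdd_mul (hDdd_meas t).aestronglyMeasurable (ae_of_all _ (hbd t))
  have hDsq : ∀ t, Integrable (fun ω => Ddd t ω ^ 2) P := by
    intro t
    simpa [pow_two] using
      (hDdd_int t).bdd_mul (hDdd_meas t).aestronglyMeasurable (ae_of_all _ (hbd t))
  -- partition lemma
  have hpart : ∀ X : Ω → ℝ, Integrable X P →
      ∫ ω, X ω ∂P = ∑ g ∈ I, ∫ ω in {ω | G ω = g}, X ω ∂P := by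
    intro X hX
    have h1 : X = fun ω => ∑ g ∈ I, Set.indicator {ω' | G ω' = g} X ω := by
      funext ω
      rw [Finset.sum_eq_single_of_mem (G ω) (hGI ω)]
      · exact (Set.indicator_of_mem (show ω ∈ {ω' | G ω' = G ω} from rfl) X).symm
      · intro b _ hb
        exact Set.indicator_of_notMem (fun h => hb (h.symm)) X
    calc ∫ ω, X ω ∂P = ∫ ω, ∑ g ∈ I, Set.indicator {ω' | G ω' = g} X ω ∂P := by rw [← h1]
      _ = ∑ g ∈ I, ∫ ω, Set.indicator {ω' | G ω' = g} X ω ∂P :=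
          integral_finset_sum I (fun g _ => hX.indicator (hAmeas g))
      _ = ∑ g ∈ I, ∫ ω in {ω | G ω = g}, X ω ∂P :=
          Finset.sum_congr rfl (fun g _ => integral_indicator (hAmeas g))
  -- per-cell computations
  have hC4 : ∀ (g : ℕ∞) (t : ℕ), ∫ ω in {ω | G ω = g}, D t ω ∂P = dval g t * μ g := by
    intro g t
    have key : Set.EqOn (D t) (fun _ => dval g t) {ω | G ω = g} := by
      intro ω hω
      have hg : G ω = g := hω
      rw [hD, hdval, hg]
    rw [setIntegral_congr_fun (hAmeas g) key, setIntegral_const, smul_eq_mul, hμ, mul_comm]; rfl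
  have hC3 : ∀ (g : ℕ∞) (t : ℕ), ∫ ω in {ω | G ω = g}, (Ddd t ω) ^ 2 ∂P
      = ddval g t ^ 2 * μ g := by
    intro g t
    have key : Set.EqOn (fun ω => (Ddd t ω) ^ 2) (fun _ => ddval g t ^ 2) {ω | G ω = g} := by
      intro ω hω
      have hg : G ω = g := hω
      simp only [hDdd_eq, hg]
    rw [setIntegral_congr_fun (hAmeas g) key, setIntegral_const, smul_eq_mul, hμ, mul_comm]; rfl
  have hC2 : ∀ (g : ℕ∞) (t : ℕ), t ∈ Finset.Icc 1 T →
      ∫ ω in {ω | G ω = g}, Ddd t ω * Yobs t ω ∂P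
        = ddval g t * (m g t + dval g t * τ' g t) := by
    intro g t ht
    have key : Set.EqOn (fun ω => Ddd t ω * Yobs t ω)
        (fun ω => ddval g t * (Y0 t ω + dval g t * (Y1 t ω - Y0 t ω))) {ω | G ω = g} := by
      intro ω hω
      have hg : G ω = g := hω
      have hDω : D t ω = dval g t := by rw [hD, hdval, hg]
      have hDddω : Ddd t ω = ddval g t := by rw [hDdd_eq, hg]
      simp only
      rw [hYobs t ω, hDω, hDddω]; ring
    have hint1 : IntegrableOn (fun a => Y0 t a) {ω | G ω = g} P := (hY0_int t ht).integrableOn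
    have hint2 : IntegrableOn (fun a => dval g t * (Y1 t a - Y0 t a)) {ω | G ω = g} P := by
      exact (((hY1_int t ht).sub (hY0_int t ht)).integrableOn).const_mul _
    rw [setIntegral_congr_fun (hAmeas g) key, integral_const_mul,
      integral_add hint1 hint2, integral_const_mul, hm, hτ']
  -- basic sums
  have hFint : ∀ t, F t = ∫ ω, D t ω ∂P := by
    intro t
    rw [hF]
    have : (fun ω => D t ω) = Set.indicator {ω | G ω ≤ (t:ℕ∞)} (fun _ => (1:ℝ)) := by
      funext ω
      rw [hD, Set.indicator_apply]
      simp only [Set.mem_setOf_eq]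
    rw [this, integral_indicator (hsetle t)]
    simp; rfl
  have hSmu : ∑ g ∈ I, μ g = 1 := by
    have h := hpart (fun _ => (1:ℝ)) (integrable_const 1)
    simp only [integral_const, measure_univ, ENNReal.toReal_one, smul_eq_mul, mul_one,
      Measure.restrict_apply_univ] at h
    rw [Finset.sum_congr rfl (fun g _ => hμ g)]
    simpa [Measure.real] using h.symm
  have hSF : ∀ s : ℕ, ∑ g ∈ I, dval g s * μ g = F s := by
    intro s
    rw [hFint s, hpart (D s) (hDint s)]
    exact (Finset.sum_congr rfl (fun g _ => hC4 g s)).symm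
  -- (A): for each g, the weights sum to zero over t
  have hAt : ∀ g : ℕ∞, ∑ t ∈ Finset.Icc 1 T, ddval g t = 0 := by
    intro g
    have hcard : (Finset.Icc 1 T).card = T := by rw [Nat.card_Icc]; omega
    rw [Finset.sum_congr rfl (fun t _ => hddval g t)]
    rw [Finset.sum_add_distrib, Finset.sum_sub_distrib, Finset.sum_sub_distrib,
      Finset.sum_const, Finset.sum_const, hcard, nsmul_eq_mul, nsmul_eq_mul]
    field_simp
    ring
  -- (B): for each t, weighted sum over g is zero
  have hB : ∀ t : ℕ, ∑ g ∈ I, ddval g t * μ g = 0 := by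
    intro t
    have expand : ∀ g, ddval g t * μ g = dval g t * μ g
        - (1 / (T : ℝ)) * ((∑ s ∈ Finset.Icc 1 T, dval g s) * μ g)
        - F t * μ g + ((1 / (T : ℝ)) * ∑ s ∈ Finset.Icc 1 T, F s) * μ g := by
      intro g; rw [hddval g t]; ring
    rw [Finset.sum_congr rfl (fun g _ => expand g)]
    rw [Finset.sum_add_distrib, Finset.sum_sub_distrib, Finset.sum_sub_distrib,
      ← Finset.mul_sum, ← Finset.mul_sum, ← Finset.mul_sum, hSF t, hSmu]
    have hswap : ∑ g ∈ I, (∑ s ∈ Finset.Icc 1 T, dval g s) * μ g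
        = ∑ s ∈ Finset.Icc 1 T, F s := by
      rw [Finset.sum_congr rfl (fun g _ => Finset.sum_mul ..), Finset.sum_comm]
      exact Finset.sum_congr rfl (fun s _ => hSF s)
    rw [hswap]
    ring
  -- key cast computation: ddval at finite treated cells equals aw
  have hddaw : ∀ k t : ℕ, 2 ≤ k → k ≤ T → k ≤ t → ddval (k : ℕ∞) t = aw k t := by
    intro k t hk2 hkT hkt
    have hnd : ∑ s ∈ Finset.Icc 1 T, dval (k : ℕ∞) s = (T : ℝ) - (k : ℝ) + 1 := by
      have h1 : ∀ s ∈ Finset.Icc 1 T, dval (k : ℕ∞) s = if k ≤ s then (1:ℝ) else 0 := by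
        intro s _; rw [hdval]; simp [Nat.cast_le]
      rw [Finset.sum_congr rfl h1, Finset.sum_boole]
      have h2 : (Finset.Icc 1 T).filter (fun s => k ≤ s) = Finset.Icc k T := by
        ext s; simp only [Finset.mem_filter, Finset.mem_Icc]; omega
      rw [h2, Nat.card_Icc, Nat.cast_sub (by omega : k ≤ T + 1)]
      push_cast; ring
    rw [hddval, haw, hnd, hdval, if_pos (by exact_mod_cast hkt)]
    ring
  -- reindexing lemma
  have hRe : ∀ t ∈ Finset.Icc 1 T, ∀ v : ℕ∞ → ℝ,
      ∑ g ∈ I, ddval g t * dval g t * v g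
        = ∑ k ∈ Finset.Icc 2 (min t T), aw k t * v (k : ℕ∞) := by
    intro t ht v
    rw [Finset.mem_Icc] at ht
    have hmin : min t T = t := min_eq_left ht.2
    rw [hIdef, Finset.sum_insert htopS]
    have htop0 : ddval (⊤:ℕ∞) t * dval (⊤:ℕ∞) t * v ⊤ = 0 := by
      rw [hdval]; simp
    rw [htop0, zero_add, hS,
      Finset.sum_image (fun a _ b _ h => by exact_mod_cast h), hmin]
    rw [← Finset.sum_subset (Finset.Icc_subset_Icc_right ht.2) ?_]
    · apply Finset.sum_congr rfl
      intro k hk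
      rw [Finset.mem_Icc] at hk
      have hd1 : dval (k:ℕ∞) t = 1 := by
        rw [hdval, if_pos (by exact_mod_cast hk.2)]
      rw [hd1, mul_one, hddaw k t hk.1 (hk.2.trans ht.2) hk.2]
    · intro k hk hk'
      rw [Finset.mem_Icc] at hk
      rw [Finset.mem_Icc] at hk'
      have hlt : t < k := by omega
      have hd0 : dval (k:ℕ∞) t = 0 := by
        rw [hdval, if_neg (by exact_mod_cast Nat.not_le.mpr hlt)]
      rw [hd0]; ring
  -- parallel trends: telescoping
  have hsubint : ∀ (g : ℕ∞) (t : ℕ), 2 ≤ t → t ≤ T →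
      (∫ ω in {ω | G ω = g}, (Y0 t ω - Y0 (t-1) ω) ∂P) = m g t - m g (t-1) := by
    intro g t h2 ht
    rw [integral_sub ((hY0_int t (by rw [Finset.mem_Icc]; omega)).integrableOn)
      ((hY0_int (t-1) (by rw [Finset.mem_Icc]; omega)).integrableOn), hm, hm]
  have hP1 : ∀ g ∈ I, ∀ t : ℕ, 2 ≤ t → t ≤ T → m g t - m g (t-1) = μ g * δ t := by
    intro g hg t h2 ht
    have hpt := hPT t h2 ht g ⊤ (hImem g hg) (Or.inl rfl)
    rw [hsubint g t h2 ht, ← hδ t, ← hμ g] at hpt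
    have hμg : μ g ≠ 0 := (hμpos g hg).ne'
    rw [div_eq_iff hμg] at hpt
    rw [hpt]; ring
  have hP2 : ∀ g ∈ I, ∀ t : ℕ, 1 ≤ t → t ≤ T →
      m g t = m g 1 + μ g * ∑ u ∈ Finset.Icc 2 t, δ u := by
    intro g hg t h1
    induction t, h1 using Nat.le_induction with
    | base =>
      intro _
      rw [Finset.Icc_eq_empty (by omega)]
      simp
    | succ n hn ih =>
      intro hT'
      have h1 := hP1 g hg (n+1) (by omega) hT'
      simp only [Nat.add_sub_cancel] at h1
      rw [Finset.sum_Icc_succ_top (by omega : 2 ≤ n + 1)]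
      have h2 := ih (by omega)
      rw [mul_add]
      linarith
  -- the Y0-part vanishes
  have hZ : ∑ t ∈ Finset.Icc 1 T, ∑ g ∈ I, ddval g t * m g t = 0 := by
    have e : ∀ t ∈ Finset.Icc 1 T, ∑ g ∈ I, ddval g t * m g t
        = (∑ g ∈ I, ddval g t * m g 1)
          + (∑ g ∈ I, ddval g t * μ g) * (∑ u ∈ Finset.Icc 2 t, δ u) := by
      intro t ht
      rw [Finset.mem_Icc] at ht
      rw [Finset.sum_mul, ← Finset.sum_add_distrib]
      apply Finset.sum_congr rfl
      intro g hg
      rw [hP2 g hg t ht.1 ht.2]; ring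
    rw [Finset.sum_congr rfl e, Finset.sum_add_distrib]
    have h2 : ∑ t ∈ Finset.Icc 1 T,
        (∑ g ∈ I, ddval g t * μ g) * (∑ u ∈ Finset.Icc 2 t, δ u) = 0 :=
      Finset.sum_eq_zero fun t _ => by rw [hB t, zero_mul]
    rw [h2, add_zero, Finset.sum_comm]
    apply Finset.sum_eq_zero
    intro g _
    rw [← Finset.sum_mul, hAt g, zero_mul]
  -- statement 1
  have key1 : ∀ t ∈ Finset.Icc 1 T, ∫ ω, Ddd t ω * Yobs t ω ∂P
      = (∑ g ∈ I, ddval g t * m g t)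
        + ∑ k ∈ Finset.Icc 2 (min t T), aw k t * τ k t * (P {ω | G ω = (k:ℕ∞)}).toReal := by
    intro t ht
    rw [hpart _ (hDY t ht), Finset.sum_congr rfl (fun g _ => hC2 g t ht)]
    have hsplit : ∑ g ∈ I, ddval g t * (m g t + dval g t * τ' g t)
        = (∑ g ∈ I, ddval g t * m g t) + ∑ g ∈ I, ddval g t * dval g t * τ' g t := by
      rw [← Finset.sum_add_distrib]
      exact Finset.sum_congr rfl fun g _ => by ring
    rw [hsplit, hRe t ht (fun g => τ' g t)]
    congr 1
    apply Finset.sum_congr rfl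
    intro k hk
    rw [Finset.mem_Icc] at hk
    have hkI : (k : ℕ∞) ∈ I := by
      rw [hIdef]
      exact Finset.mem_insert_of_mem (Finset.mem_image_of_mem _
        (Finset.mem_Icc.mpr ⟨hk.1, hk.2.trans (min_le_right t T)⟩))
    have hμk : (P {ω | G ω = (k:ℕ∞)}).toReal ≠ 0 := by
      rw [← hμ]; exact (hμpos _ hkI).ne'
    simp only [hτ']
    rw [hτ k t, mul_assoc, div_mul_cancel₀ _ hμk]
  have stmt1 : (∑ t ∈ Finset.Icc 1 T, ∫ ω, Ddd t ω * Yobs t ω ∂P) =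
      (∑ t ∈ Finset.Icc 1 T, ∑ g ∈ Finset.Icc 2 (min t T),
        aw g t * τ g t * (P {ω | G ω = (g : ℕ∞)}).toReal) := by
    rw [Finset.sum_congr rfl key1, Finset.sum_add_distrib, hZ, zero_add]
  -- statement 2
  have key2 : ∀ t ∈ Finset.Icc 1 T, ∫ ω, (Ddd t ω) ^ 2 ∂P
      = (∑ k ∈ Finset.Icc 2 (min t T), aw k t * (P {ω | G ω = (k:ℕ∞)}).toReal)
        - ∑ g ∈ I, ((1 / (T:ℝ) * ∑ s ∈ Finset.Icc 1 T, dval g s) * μ g) * ddval g t := by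
    intro t ht
    rw [hpart _ (hDsq t), Finset.sum_congr rfl (fun g _ => hC3 g t)]
    have e : ∑ g ∈ I, ddval g t ^ 2 * μ g
        = (∑ g ∈ I, ddval g t * dval g t * μ g)
          - (∑ g ∈ I, ((1 / (T:ℝ) * ∑ s ∈ Finset.Icc 1 T, dval g s) * μ g) * ddval g t)
          - (F t - (1 / (T:ℝ)) * ∑ s ∈ Finset.Icc 1 T, F s)
              * ∑ g ∈ I, ddval g t * μ g := by
      rw [Finset.mul_sum, ← Finset.sum_sub_distrib, ← Finset.sum_sub_distrib]
      apply Finset.sum_congr rfl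
      intro g _
      rw [pow_two]
      nth_rewrite 2 [hddval g t]
      ring
    rw [e, hB t, mul_zero, sub_zero, hRe t ht (fun g => μ g)]
    congr 1
    exact Finset.sum_congr rfl fun k _ => by simp only [hμ]
  have stmt2 : (∑ t ∈ Finset.Icc 1 T, ∫ ω, (Ddd t ω) ^ 2 ∂P) =
      (∑ t ∈ Finset.Icc 1 T, ∑ g ∈ Finset.Icc 2 (min t T),
        aw g t * (P {ω | G ω = (g : ℕ∞)}).toReal) := by
    rw [Finset.sum_congr rfl key2, Finset.sum_sub_distrib]
    have hzero : ∑ t ∈ Finset.Icc 1 T, ∑ g ∈ I,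
        ((1 / (T:ℝ) * ∑ s ∈ Finset.Icc 1 T, dval g s) * μ g) * ddval g t = 0 := by
      rw [Finset.sum_comm]
      apply Finset.sum_eq_zero
      intro g _
      rw [← Finset.mul_sum, hAt g, mul_zero]
    rw [hzero, sub_zero]
  exact ⟨stmt1, stmt2, by rw [stmt1, stmt2]⟩
end

section
/- TWFE representation with nonnegative weights under time-constant group effects (Proposition 9, following Goodman-Bacon 2021): Under the staggered adoption panel setting and the parallel trends assumption, suppose additionally that for every g ∈ {2,…,T} there is τ(g) ∈ ℝ with E[Y_t(1) − Y_t(0) | G = g] = τ(g) for all t ∈ {1,…,T}. Define, for g ∈ {2,…,T}, a_H(g) := ((g−1)/T)·[ (Σ_{t=g}^T (1 − F(t)))/(T − g + 1) + (Σ_{t=1}^{g−1} F(t))/(g−1) ]. Then a_H(g) ≥ 0 for every g, Σ_{t=1}^T E[D̈_t·Y_t] = Σ_{g=2}^T (T − g + 1)·a_H(g)·τ(g)·P(G = g), and Σ_{t=1}^T E[D̈_t²] = Σ_{g=2}^T (T − g + 1)·a_H(g)·P(G = g); consequently the two-way fixed effects estimand β_TWFE := (Σ_t E[D̈_t·Y_t])/(Σ_t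 E[D̈_t²]) is a nonnegatively weighted average of the group average treatment effects τ(g) over treated units. -/
open MeasureTheory
open scoped ENNReal

/-- **Proposition 9** (TWFE representation with nonnegative weights under time-constant
group effects, following Goodman-Bacon 2021). In the staggered adoption panel under
parallel trends and group effects `τ(g)` constant over time, the TWFE numerator and
denominator decompose with nonnegative weights `a_H(g)`, so the TWFE estimand is a
nonnegatively weighted average of the group ATTs `τ(g)`. -/
theorem twfe_nonnegative_weights_time_constant_effects
    {Ω : Type*} {mΩ : MeasurableSpace Ω} (P : Measure Ω) [IsProbabilityMeasure P]
    (T : ℕ) (hT : 2 ≤ T)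
    (G : Ω → ℕ∞) (hG_meas : Measurable G)
    (hG_range : ∀ ω, G ω = ⊤ ∨ (2 ≤ G ω ∧ G ω ≤ (T : ℕ∞)))
    (hG_top : 0 < P {ω | G ω = ⊤})
    (hG_pos : ∀ g : ℕ, 2 ≤ g → g ≤ T → 0 < P {ω | G ω = (g : ℕ∞)})
    (Y0 Y1 : ℕ → Ω → ℝ)
    (hY0_int : ∀ t ∈ Finset.Icc 1 T, Integrable (Y0 t) P)
    (hY1_int : ∀ t ∈ Finset.Icc 1 T, Integrable (Y1 t) P)
    (hY0_meas : ∀ t ∈ Finset.Icc 1 T, Measurable (Y0 t))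
    (hY1_meas : ∀ t ∈ Finset.Icc 1 T, Measurable (Y1 t))
    (D : ℕ → Ω → ℝ) (hD : ∀ t ω, D t ω = if G ω ≤ (t : ℕ∞) then 1 else 0)
    (Yobs : ℕ → Ω → ℝ) (hYobs : ∀ t ω, Yobs t ω = D t ω * Y1 t ω + (1 - D t ω) * Y0 t ω)
    (F : ℕ → ℝ) (hF : ∀ t, F t = (P {ω | G ω ≤ (t : ℕ∞)}).toReal)
    (Ddd : ℕ → Ω → ℝ)
    (hDdd : ∀ t ω, Ddd t ω = D t ω - (1 / (T : ℝ)) * ∑ s ∈ Finset.Icc 1 T, D s ω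
      - F t + (1 / (T : ℝ)) * ∑ s ∈ Finset.Icc 1 T, F s)
    -- parallel trends
    (hPT : ∀ t : ℕ, 2 ≤ t → t ≤ T →
      ∀ g g' : ℕ∞, (g = ⊤ ∨ (2 ≤ g ∧ g ≤ (T : ℕ∞))) → (g' = ⊤ ∨ (2 ≤ g' ∧ g' ≤ (T : ℕ∞))) →
        (∫ ω in {ω | G ω = g}, (Y0 t ω - Y0 (t - 1) ω) ∂P) / (P {ω | G ω = g}).toReal =
        (∫ ω in {ω | G ω = g'}, (Y0 t ω - Y0 (t - 1) ω) ∂P) / (P {ω | G ω = g'}).toReal)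
    -- group-time average treatment effects constant over time
    (τ : ℕ → ℝ)
    (hτ : ∀ g : ℕ, 2 ≤ g → g ≤ T → ∀ t ∈ Finset.Icc 1 T,
      (∫ ω in {ω | G ω = (g : ℕ∞)}, (Y1 t ω - Y0 t ω) ∂P) /
        (P {ω | G ω = (g : ℕ∞)}).toReal = τ g)
    -- the Goodman-Bacon-type weights
    (aH : ℕ → ℝ)
    (haH : ∀ g : ℕ, 2 ≤ g → g ≤ T → aH g = (((g : ℝ) - 1) / (T : ℝ)) *
      ((∑ t ∈ Finset.Icc g T, (1 - F t)) / ((T : ℝ) - (g : ℝ) + 1)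
        + (∑ t ∈ Finset.Icc 1 (g - 1), F t) / ((g : ℝ) - 1))) :
    (∀ g : ℕ, 2 ≤ g → g ≤ T → 0 ≤ aH g) ∧
    (∑ t ∈ Finset.Icc 1 T, ∫ ω, Ddd t ω * Yobs t ω ∂P) =
      (∑ g ∈ Finset.Icc 2 T,
        ((T : ℝ) - (g : ℝ) + 1) * aH g * τ g * (P {ω | G ω = (g : ℕ∞)}).toReal) ∧
    (∑ t ∈ Finset.Icc 1 T, ∫ ω, (Ddd t ω) ^ 2 ∂P) =
      (∑ g ∈ Finset.Icc 2 T,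
        ((T : ℝ) - (g : ℝ) + 1) * aH g * (P {ω | G ω = (g : ℕ∞)}).toReal) ∧
    (∑ t ∈ Finset.Icc 1 T, ∫ ω, Ddd t ω * Yobs t ω ∂P) /
        (∑ t ∈ Finset.Icc 1 T, ∫ ω, (Ddd t ω) ^ 2 ∂P) =
      (∑ g ∈ Finset.Icc 2 T,
        ((T : ℝ) - (g : ℝ) + 1) * aH g * τ g * (P {ω | G ω = (g : ℕ∞)}).toReal) /
      (∑ g ∈ Finset.Icc 2 T,
        ((T : ℝ) - (g : ℝ) + 1) * aH g * (P {ω | G ω = (g : ℕ∞)}).toReal) := by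
  classical
  have hT0' : (0:ℝ) < (T:ℝ) := by
    have : (0:ℕ) < T := by omega
    exact_mod_cast this
  have hT0 : (T:ℝ) ≠ 0 := ne_of_gt hT0'
  have hF0 : ∀ t, 0 ≤ F t := fun t => by rw [hF t]; exact ENNReal.toReal_nonneg
  have hF1 : ∀ t, F t ≤ 1 := by
    intro t
    rw [hF t]
    calc (P {ω | G ω ≤ (t:ℕ∞)}).toReal ≤ (1:ℝ≥0∞).toReal :=
          ENNReal.toReal_mono ENNReal.one_ne_top prob_le_one
      _ = 1 := by simp
  -- Part 1 : nonnegativity of the weights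
  have part1 : ∀ g : ℕ, 2 ≤ g → g ≤ T → 0 ≤ aH g := by
    intro g h2 hgT
    rw [haH g h2 hgT]
    have hg1 : (0:ℝ) < (g:ℝ) - 1 := by
      have : (2:ℝ) ≤ (g:ℝ) := by exact_mod_cast h2
      linarith
    have hTg : (0:ℝ) < (T:ℝ) - (g:ℝ) + 1 := by
      have : (g:ℝ) ≤ (T:ℝ) := by exact_mod_cast hgT
      linarith
    apply mul_nonneg (div_nonneg hg1.le hT0'.le)
    apply add_nonneg
    · exact div_nonneg (Finset.sum_nonneg fun t _ => by linarith [hF1 t]) hTg.le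
    · exact div_nonneg (Finset.sum_nonneg fun t _ => hF0 t) hg1.le
  -- setup : partition of Ω according to G
  set S : Finset ℕ := Finset.Icc 2 T with hS
  set SS : Finset ℕ∞ := insert ⊤ (S.image (fun n : ℕ => (n:ℕ∞))) with hSS
  set A : ℕ∞ → Set Ω := fun g => {ω | G ω = g} with hA
  have hAmeas : ∀ g, MeasurableSet (A g) := fun g => hG_meas (measurableSet_singleton g)
  have htop_mem : (⊤ : ℕ∞) ∈ SS := Finset.mem_insert_self _ _
  have hcast_mem : ∀ n ∈ S, (n:ℕ∞) ∈ SS := fun n hn =>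
    Finset.mem_insert_of_mem (Finset.mem_image_of_mem _ hn)
  have hcast_inj : ∀ a ∈ S, ∀ b ∈ S, (a:ℕ∞) = (b:ℕ∞) → a = b := by
    intro a _ b _ h; exact_mod_cast h
  have htop_not : (⊤:ℕ∞) ∉ S.image (fun n : ℕ => (n:ℕ∞)) := by simp
  have hSSrange : ∀ g ∈ SS, g = ⊤ ∨ (2 ≤ g ∧ g ≤ (T:ℕ∞)) := by
    intro g hg
    rcases Finset.mem_insert.1 hg with h | h
    · exact Or.inl h
    · rcases Finset.mem_image.1 h with ⟨n, hn, rfl⟩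
      rw [hS, Finset.mem_Icc] at hn
      exact Or.inr ⟨by exact_mod_cast hn.1, by exact_mod_cast hn.2⟩
  have hdisj : (↑SS : Set ℕ∞).Pairwise (Function.onFun Disjoint A) := by
    intro g _ g' _ hne
    simp only [Function.onFun, hA]
    rw [Set.disjoint_left]
    rintro ω h1 h2
    exact hne ((h1 : G ω = g).symm.trans (h2 : G ω = g'))
  have hunion : (⋃ g ∈ SS, A g) = Set.univ := by
    ext ω
    simp only [Set.mem_iUnion, Set.mem_univ, iff_true]
    rcases hG_range ω with h | ⟨h2, hle⟩
    · exact ⟨⊤, htop_mem, h⟩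
    · have hne : G ω ≠ ⊤ := by
        intro hc
        rw [hc, top_le_iff] at hle
        exact absurd hle (by simp)
      lift G ω to ℕ using hne with n hn
      refine ⟨(n:ℕ∞), hcast_mem n ?_, hn.symm⟩
      have hmem : n ∈ Finset.Icc 2 T := by
        rw [Finset.mem_Icc]
        exact ⟨by exact_mod_cast h2, by exact_mod_cast hle⟩
      exact hmem
  have hSplit : ∀ f : Ω → ℝ, Integrable f P →
      ∫ ω, f ω ∂P = ∑ g ∈ SS, ∫ ω in A g, f ω ∂P := by
    intro f hf
    rw [← setIntegral_univ (μ := P) (f := f), ← hunion,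
      integral_biUnion_finset SS (fun g _ => hAmeas g) hdisj (fun g _ => hf.integrableOn)]
  have hPfin : ∀ g : ℕ∞, P (A g) ≠ ⊤ := fun g => measure_ne_top P _
  have hp_pos : ∀ g ∈ SS, 0 < (P (A g)).toReal := by
    intro g hg
    rcases Finset.mem_insert.1 hg with rfl | h
    · exact ENNReal.toReal_pos (ne_of_gt hG_top) (hPfin _)
    · rcases Finset.mem_image.1 h with ⟨n, hn, rfl⟩
      rw [hS, Finset.mem_Icc] at hn
      exact ENNReal.toReal_pos (ne_of_gt (hG_pos n hn.1 hn.2)) (hPfin _)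
  -- deterministic versions of D and Ddd as functions of the group
  set dN : ℕ → ℕ∞ → ℝ := fun t g => if g ≤ (t:ℕ∞) then 1 else 0 with hdN
  set al : ℕ∞ → ℝ := fun g => (1/(T:ℝ)) * ∑ s ∈ Finset.Icc 1 T, dN s g with hal
  set Fb : ℝ := (1/(T:ℝ)) * ∑ s ∈ Finset.Icc 1 T, F s with hFb
  set dd : ℕ → ℕ∞ → ℝ := fun t g => dN t g - al g - F t + Fb with hdd
  have hDval : ∀ t ω, D t ω = dN t (G ω) := fun t ω => hD t ω
  have hDddval : ∀ t ω, Ddd t ω = dd t (G ω) := by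
    intro t ω
    simp only [hDdd, hD, hdd, hdN, hal, hFb]
  have hdNtop : ∀ t : ℕ, dN t ⊤ = 0 := by
    intro t; simp [hdN]
  -- measurability and integrability facts
  have hsle : ∀ t : ℕ, MeasurableSet {ω | G ω ≤ (t:ℕ∞)} :=
    fun t => hG_meas ((Set.to_countable {g : ℕ∞ | g ≤ (t:ℕ∞)}).measurableSet)
  have hmeasD : ∀ t, Measurable (D t) := by
    intro t
    have h : D t = fun ω => if G ω ≤ (t:ℕ∞) then (1:ℝ) else 0 := funext (hD t)
    rw [h]
    exact Measurable.ite (hsle t) measurable_const measurable_const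
  have hintD : ∀ t, Integrable (D t) P := by
    intro t
    have h : D t = Set.indicator {ω | G ω ≤ (t:ℕ∞)} (fun _ => (1:ℝ)) := by
      funext ω; rw [hD]; by_cases h : G ω ≤ (t:ℕ∞) <;> simp [Set.indicator_apply, h]
    rw [h]
    exact (integrable_const 1).indicator (hsle t)
  have hintDdd : ∀ t, Integrable (Ddd t) P := by
    intro t
    have h : Ddd t = fun ω => D t ω - (1/(T:ℝ)) * ∑ s ∈ Finset.Icc 1 T, D s ω
        - F t + (1/(T:ℝ)) * ∑ s ∈ Finset.Icc 1 T, F s := funext (hDdd t)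
    rw [h]
    exact (((hintD t).sub ((integrable_finset_sum _ fun s _ => hintD s).const_mul _)).sub
      (integrable_const _)).add (integrable_const _)
  have hmeasDdd : ∀ t, Measurable (Ddd t) := by
    intro t
    have h : Ddd t = fun ω => D t ω - (1/(T:ℝ)) * ∑ s ∈ Finset.Icc 1 T, D s ω
        - F t + (1/(T:ℝ)) * ∑ s ∈ Finset.Icc 1 T, F s := funext (hDdd t)
    rw [h]
    exact (((hmeasD t).sub ((Finset.measurable_sum _ fun s _ => hmeasD s).const_mul _)).sub
      measurable_const).add measurable_const
  have hcardT : (Finset.Icc 1 T).card = T := by simp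
  have hDdd_bd : ∀ t ω, ‖Ddd t ω‖ ≤ 4 := by
    intro t ω
    have h1 : ∀ s, 0 ≤ D s ω ∧ D s ω ≤ 1 := by
      intro s; rw [hD]; split <;> norm_num
    have key : ∀ h : ℕ → ℝ, (∀ s, 0 ≤ h s) → (∀ s, h s ≤ 1) →
        0 ≤ (1/(T:ℝ)) * ∑ s ∈ Finset.Icc 1 T, h s ∧
        (1/(T:ℝ)) * ∑ s ∈ Finset.Icc 1 T, h s ≤ 1 := by
      intro h h0 hle1
      constructor
      · exact mul_nonneg (by positivity) (Finset.sum_nonneg fun s _ => h0 s)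
      · have hs : ∑ s ∈ Finset.Icc 1 T, h s ≤ (T:ℝ) := by
          calc ∑ s ∈ Finset.Icc 1 T, h s ≤ ∑ s ∈ Finset.Icc 1 T, (1:ℝ) :=
                Finset.sum_le_sum fun s _ => hle1 s
            _ = (T:ℝ) := by rw [Finset.sum_const, hcardT]; simp
        calc (1/(T:ℝ)) * ∑ s ∈ Finset.Icc 1 T, h s ≤ (1/(T:ℝ)) * (T:ℝ) :=
              mul_le_mul_of_nonneg_left hs (by positivity)
          _ = 1 := by field_simp
    obtain ⟨hu0, hu1⟩ := key (fun s => D s ω) (fun s => (h1 s).1) (fun s => (h1 s).2)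
    obtain ⟨hv0, hv1⟩ := key F hF0 hF1
    rw [hDdd, Real.norm_eq_abs, abs_le]
    constructor
    · linarith [(h1 t).1, (h1 t).2, hF0 t, hF1 t]
    · linarith [(h1 t).1, (h1 t).2, hF0 t, hF1 t]
  have hbdd : ∀ t (f : Ω → ℝ), Integrable f P →
      Integrable (fun ω => Ddd t ω * f ω) P := fun t f hf =>
    hf.bdd_mul (hmeasDdd t).aestronglyMeasurable (Filter.Eventually.of_forall fun ω => hDdd_bd t ω)
  -- pull out constants on the pieces
  have hpull : ∀ t (g : ℕ∞) (f : Ω → ℝ),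
      ∫ ω in A g, Ddd t ω * f ω ∂P = dd t g * ∫ ω in A g, f ω ∂P := by
    intro t g f
    rw [setIntegral_congr_fun (hAmeas g)
      (g := fun ω => dd t g * f ω)
      (fun ω hω => by rw [hDddval t ω, show G ω = g from hω]),
      integral_const_mul]
  have hdecomp : ∀ t (f : Ω → ℝ), Integrable f P →
      ∫ ω, Ddd t ω * f ω ∂P = ∑ g ∈ SS, dd t g * ∫ ω in A g, f ω ∂P := by
    intro t f hf
    rw [hSplit _ (hbdd t f hf)]
    exact Finset.sum_congr rfl fun g _ => hpull t g f
  -- zero-sum facts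
  have hsum_t_dd : ∀ g : ℕ∞, ∑ t ∈ Finset.Icc 1 T, dd t g = 0 := by
    intro g
    have h : ∀ t, dd t g = dN t g - al g - F t + Fb := fun t => by simp only [hdd]
    rw [Finset.sum_congr rfl fun t _ => h t, Finset.sum_add_distrib,
      Finset.sum_sub_distrib, Finset.sum_sub_distrib, Finset.sum_const, Finset.sum_const,
      hcardT, nsmul_eq_mul, nsmul_eq_mul]
    simp only [hal, hFb]
    field_simp
    ring
  have hintegralD : ∀ t, ∫ ω, D t ω ∂P = F t := by
    intro t
    have h : D t = Set.indicator {ω | G ω ≤ (t:ℕ∞)} (fun _ => (1:ℝ)) := by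
      funext ω; rw [hD]; by_cases h : G ω ≤ (t:ℕ∞) <;> simp [Set.indicator_apply, h]
    rw [h, integral_indicator_const _ (hsle t), hF]; simp; rfl
  have hintDdd0 : ∀ t, ∫ ω, Ddd t ω ∂P = 0 := by
    intro t
    have heq : Ddd t = fun ω => (D t ω - (1/(T:ℝ)) * ∑ s ∈ Finset.Icc 1 T, D s ω - F t)
        + (1/(T:ℝ)) * ∑ s ∈ Finset.Icc 1 T, F s := funext (hDdd t)
    have i1 : Integrable (fun ω => (1/(T:ℝ)) * ∑ s ∈ Finset.Icc 1 T, D s ω) P :=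
      (integrable_finset_sum _ fun s _ => hintD s).const_mul _
    have heq2 : ∫ ω, Ddd t ω ∂P
        = ∫ ω, ((D t ω - (1/(T:ℝ)) * ∑ s ∈ Finset.Icc 1 T, D s ω - F t)
            + (1/(T:ℝ)) * ∑ s ∈ Finset.Icc 1 T, F s) ∂P :=
      integral_congr_ae (Filter.Eventually.of_forall (fun ω => hDdd t ω))
    have I2 : Integrable (fun ω => D t ω - (1/(T:ℝ)) * ∑ s ∈ Finset.Icc 1 T, D s ω) P :=
      (hintD t).sub i1
    have I3 : Integrable (fun ω => D t ω - (1/(T:ℝ)) * ∑ s ∈ Finset.Icc 1 T, D s ω - F t) P :=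
      I2.sub (integrable_const _)
    rw [heq2, integral_add I3 (integrable_const _), integral_sub I2 (integrable_const _),
      integral_sub (hintD t) i1, integral_const_mul, integral_finset_sum _ fun s _ => hintD s]
    simp only [hintegralD, integral_const, Measure.real, measure_univ, ENNReal.toReal_one, smul_eq_mul,
      one_mul]
    ring
  have hsum_g_dd : ∀ t, ∑ g ∈ SS, dd t g * (P (A g)).toReal = 0 := by
    intro t
    have h1 : ∫ ω, Ddd t ω ∂P = ∑ g ∈ SS, ∫ ω in A g, Ddd t ω ∂P := hSplit _ (hintDdd t)
    have h2 : ∀ g ∈ SS, ∫ ω in A g, Ddd t ω ∂P = dd t g * (P (A g)).toReal := by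
      intro g _
      rw [setIntegral_congr_fun (hAmeas g) (g := fun _ => dd t g)
        (fun ω hω => by rw [hDddval t ω, show G ω = g from hω]),
        setIntegral_const, smul_eq_mul, mul_comm, Measure.real]
    rw [hintDdd0, Finset.sum_congr rfl h2] at h1
    exact h1.symm
  -- parallel trends: common trend δ
  obtain ⟨δ, hPT'⟩ : ∃ δ : ℕ → ℝ, ∀ t : ℕ, 2 ≤ t → t ≤ T → ∀ g ∈ SS,
      ∫ ω in A g, (Y0 t ω - Y0 (t-1) ω) ∂P = δ t * (P (A g)).toReal := by
    refine ⟨fun t => (∫ ω in A ⊤, (Y0 t ω - Y0 (t-1) ω) ∂P) / (P (A ⊤)).toReal, ?_⟩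
    intro t h2 hle g hg
    have h := hPT t h2 hle g ⊤ (hSSrange g hg) (Or.inl rfl)
    rw [div_eq_iff (ne_of_gt (hp_pos g hg))] at h
    exact h
  have hτ' : ∀ n ∈ S, ∀ t ∈ Finset.Icc 1 T,
      ∫ ω in A (n:ℕ∞), (Y1 t ω - Y0 t ω) ∂P = τ n * (P (A (n:ℕ∞))).toReal := by
    intro n hn t ht
    have hn' := hn
    rw [hS, Finset.mem_Icc] at hn'
    have h := hτ n hn'.1 hn'.2 t ht
    rw [div_eq_iff (ne_of_gt (hp_pos _ (hcast_mem n hn)))] at h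
    exact h
  -- telescoping under parallel trends
  have hY0g : ∀ t, 1 ≤ t → t ≤ T → ∀ g ∈ SS,
      ∫ ω in A g, Y0 t ω ∂P = (∫ ω in A g, Y0 1 ω ∂P)
        + (∑ s ∈ Finset.Icc 2 t, δ s) * (P (A g)).toReal := by
    intro t
    induction t with
    | zero => intro h; omega
    | succ k ih =>
      intro _ hle g hg
      by_cases hk : k = 0
      · subst hk; simp
      · have hk1 : 1 ≤ k := Nat.one_le_iff_ne_zero.2 hk
        have h2 : 2 ≤ k + 1 := by omega
        have hPTk := hPT' (k+1) h2 hle g hg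
        simp only [Nat.add_sub_cancel] at hPTk
        have hsub : ∫ ω in A g, (Y0 (k+1) ω - Y0 k ω) ∂P
            = (∫ ω in A g, Y0 (k+1) ω ∂P) - ∫ ω in A g, Y0 k ω ∂P :=
          integral_sub ((hY0_int (k+1) (by rw [Finset.mem_Icc]; omega)).integrableOn)
            ((hY0_int k (by rw [Finset.mem_Icc]; omega)).integrableOn)
        rw [hsub] at hPTk
        have hins : Finset.Icc 2 (k+1) = insert (k+1) (Finset.Icc 2 k) := by
          ext x; simp only [Finset.mem_Icc, Finset.mem_insert]; omega
        have hnotmem : k + 1 ∉ Finset.Icc 2 k := by simp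
        have hrec := ih hk1 (by omega) g hg
        rw [hins, Finset.sum_insert hnotmem]
        have : ∫ ω in A g, Y0 (k+1) ω ∂P = (∫ ω in A g, Y0 k ω ∂P)
            + δ (k+1) * (P (A g)).toReal := by linarith
        rw [this, hrec]
        ring
  -- more integrability
  have hintYd : ∀ t ∈ Finset.Icc 1 T, Integrable (fun ω => Y1 t ω - Y0 t ω) P :=
    fun t ht => (hY1_int t ht).sub (hY0_int t ht)
  have hintDY : ∀ t ∈ Finset.Icc 1 T,
      Integrable (fun ω => D t ω * (Y1 t ω - Y0 t ω)) P := by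
    intro t ht
    have h : (fun ω => D t ω * (Y1 t ω - Y0 t ω))
        = Set.indicator {ω | G ω ≤ (t:ℕ∞)} (fun ω => Y1 t ω - Y0 t ω) := by
      funext ω; rw [hD]; by_cases h : G ω ≤ (t:ℕ∞) <;> simp [Set.indicator_apply, h]
    rw [h]
    exact (hintYd t ht).indicator (hsle t)
  have hDset : ∀ t (g : ℕ∞), ∫ ω in A g, (D t ω * (Y1 t ω - Y0 t ω)) ∂P
      = dN t g * ∫ ω in A g, (Y1 t ω - Y0 t ω) ∂P := by
    intro t g
    rw [setIntegral_congr_fun (hAmeas g)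
      (g := fun ω => dN t g * (Y1 t ω - Y0 t ω))
      (fun ω hω => by rw [hDval t ω, show G ω = g from hω]),
      integral_const_mul]
  -- Numerator computation
  have hNum : (∑ t ∈ Finset.Icc 1 T, ∫ ω, Ddd t ω * Yobs t ω ∂P)
      = ∑ n ∈ S, (∑ t ∈ Finset.Icc 1 T, dd t (n:ℕ∞) * dN t (n:ℕ∞))
          * (τ n * (P (A (n:ℕ∞))).toReal) := by
    have hterm : ∀ t ∈ Finset.Icc 1 T,
        ∫ ω, Ddd t ω * Yobs t ω ∂P
          = (∑ g ∈ SS, dd t g * ∫ ω in A g, Y0 1 ω ∂P)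
            + ∑ n ∈ S, dd t (n:ℕ∞) * dN t (n:ℕ∞) * (τ n * (P (A (n:ℕ∞))).toReal) := by
      intro t ht
      obtain ⟨ht1, ht2⟩ := Finset.mem_Icc.1 ht
      have hYsplit : (fun ω => Ddd t ω * Yobs t ω)
          = fun ω => Ddd t ω * Y0 t ω + Ddd t ω * (D t ω * (Y1 t ω - Y0 t ω)) := by
        funext ω; rw [hYobs]; ring
      rw [hYsplit, integral_add (hbdd t _ (hY0_int t ht)) (hbdd t _ (hintDY t ht)),
        hdecomp t _ (hY0_int t ht), hdecomp t _ (hintDY t ht)]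
      congr 1
      · -- Y0 part : replace by baseline
        calc ∑ g ∈ SS, dd t g * ∫ ω in A g, Y0 t ω ∂P
            = ∑ g ∈ SS, (dd t g * ∫ ω in A g, Y0 1 ω ∂P
                + (∑ s ∈ Finset.Icc 2 t, δ s) * (dd t g * (P (A g)).toReal)) := by
              refine Finset.sum_congr rfl fun g hg => ?_
              rw [hY0g t ht1 ht2 g hg]; ring
          _ = (∑ g ∈ SS, dd t g * ∫ ω in A g, Y0 1 ω ∂P)
                + (∑ s ∈ Finset.Icc 2 t, δ s)
                  * ∑ g ∈ SS, dd t g * (P (A g)).toReal := by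
              rw [Finset.sum_add_distrib, Finset.mul_sum]
          _ = ∑ g ∈ SS, dd t g * ∫ ω in A g, Y0 1 ω ∂P := by
              rw [hsum_g_dd t, mul_zero, add_zero]
      · -- treatment part
        rw [hSS, Finset.sum_insert htop_not]
        rw [hDset t ⊤, hdNtop t, zero_mul, mul_zero, zero_add,
          Finset.sum_image hcast_inj]
        refine Finset.sum_congr rfl fun n hn => ?_
        rw [hDset t _, hτ' n hn t ht]
        ring
    rw [Finset.sum_congr rfl hterm, Finset.sum_add_distrib]
    have hzero1 : ∑ t ∈ Finset.Icc 1 T, ∑ g ∈ SS, dd t g * ∫ ω in A g, Y0 1 ω ∂P = 0 := by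
      rw [Finset.sum_comm]
      refine Finset.sum_eq_zero fun g _ => ?_
      rw [← Finset.sum_mul, hsum_t_dd g, zero_mul]
    rw [hzero1, zero_add, Finset.sum_comm]
    refine Finset.sum_congr rfl fun n _ => ?_
    rw [← Finset.sum_mul]
  -- Denominator computation
  have hDen : (∑ t ∈ Finset.Icc 1 T, ∫ ω, (Ddd t ω)^2 ∂P)
      = ∑ n ∈ S, (∑ t ∈ Finset.Icc 1 T, dd t (n:ℕ∞) * dN t (n:ℕ∞))
          * (P (A (n:ℕ∞))).toReal := by
    have hterm : ∀ t ∈ Finset.Icc 1 T,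
        ∫ ω, (Ddd t ω)^2 ∂P = ∑ g ∈ SS, dd t g ^ 2 * (P (A g)).toReal := by
      intro t _
      have hint2 : Integrable (fun ω => (Ddd t ω)^2) P := by
        have h : (fun ω => (Ddd t ω)^2) = fun ω => Ddd t ω * Ddd t ω := by
          funext ω; ring
        rw [h]; exact hbdd t _ (hintDdd t)
      rw [hSplit _ hint2]
      refine Finset.sum_congr rfl fun g _ => ?_
      rw [setIntegral_congr_fun (hAmeas g) (g := fun _ => dd t g ^ 2)
        (fun ω hω => by rw [hDddval t ω, show G ω = g from hω]),
        setIntegral_const, smul_eq_mul, mul_comm, Measure.real]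
    rw [Finset.sum_congr rfl hterm]
    have hexpand : ∀ t ∈ Finset.Icc 1 T, ∀ g ∈ SS,
        dd t g ^ 2 * (P (A g)).toReal
          = dd t g * dN t g * (P (A g)).toReal
            + (dd t g * (P (A g)).toReal) * (- al g)
            + (dd t g * (P (A g)).toReal) * (Fb - F t) := by
      intro t _ g _
      have hdd_eq : dd t g = dN t g - al g - F t + Fb := by simp only [hdd]
      rw [pow_two]
      nth_rewrite 2 [hdd_eq]
      ring
    calc ∑ t ∈ Finset.Icc 1 T, ∑ g ∈ SS, dd t g ^ 2 * (P (A g)).toReal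
        = ∑ t ∈ Finset.Icc 1 T, ((∑ g ∈ SS, dd t g * dN t g * (P (A g)).toReal)
            + (∑ g ∈ SS, (dd t g * (P (A g)).toReal) * (- al g))
            + ∑ g ∈ SS, (dd t g * (P (A g)).toReal) * (Fb - F t)) := by
          refine Finset.sum_congr rfl fun t ht => ?_
          rw [Finset.sum_congr rfl (hexpand t ht), Finset.sum_add_distrib,
            Finset.sum_add_distrib]
      _ = (∑ t ∈ Finset.Icc 1 T, ∑ g ∈ SS, dd t g * dN t g * (P (A g)).toReal)
            + (∑ t ∈ Finset.Icc 1 T, ∑ g ∈ SS, (dd t g * (P (A g)).toReal) * (- al g))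
            + ∑ t ∈ Finset.Icc 1 T, ∑ g ∈ SS, (dd t g * (P (A g)).toReal) * (Fb - F t) := by
          rw [Finset.sum_add_distrib, Finset.sum_add_distrib]
      _ = ∑ t ∈ Finset.Icc 1 T, ∑ g ∈ SS, dd t g * dN t g * (P (A g)).toReal := by
          have hb : (∑ t ∈ Finset.Icc 1 T, ∑ g ∈ SS,
              (dd t g * (P (A g)).toReal) * (- al g)) = 0 := by
            rw [Finset.sum_comm]
            refine Finset.sum_eq_zero fun g _ => ?_
            rw [← Finset.sum_mul, ← Finset.sum_mul, hsum_t_dd g, zero_mul, zero_mul]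
          have hc : (∑ t ∈ Finset.Icc 1 T, ∑ g ∈ SS,
              (dd t g * (P (A g)).toReal) * (Fb - F t)) = 0 :=
            Finset.sum_eq_zero fun t _ => by rw [← Finset.sum_mul, hsum_g_dd t, zero_mul]
          rw [hb, hc, add_zero, add_zero]
      _ = ∑ n ∈ S, (∑ t ∈ Finset.Icc 1 T, dd t (n:ℕ∞) * dN t (n:ℕ∞))
            * (P (A (n:ℕ∞))).toReal := by
          rw [Finset.sum_comm, hSS, Finset.sum_insert htop_not]
          have hz : ∑ t ∈ Finset.Icc 1 T, dd t ⊤ * dN t ⊤ * (P (A ⊤)).toReal = 0 :=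
            Finset.sum_eq_zero fun t _ => by rw [hdNtop t, mul_zero, zero_mul]
          rw [hz, zero_add, Finset.sum_image hcast_inj]
          refine Finset.sum_congr rfl fun n _ => ?_
          rw [← Finset.sum_mul]
  -- the combinatorial weight identity
  have hw : ∀ n ∈ S, (∑ t ∈ Finset.Icc 1 T, dd t (n:ℕ∞) * dN t (n:ℕ∞))
      = ((T:ℝ) - (n:ℝ) + 1) * aH n := by
    intro n hn
    have hn' := hn
    rw [hS, Finset.mem_Icc] at hn'
    obtain ⟨h2, hnT⟩ := hn'
    have hdNn : ∀ t : ℕ, dN t (n:ℕ∞) = if n ≤ t then 1 else 0 := by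
      intro t; simp only [hdN, Nat.cast_le]
    have hfilter : (Finset.Icc 1 T).filter (fun t => n ≤ t) = Finset.Icc n T := by
      ext x; simp only [Finset.mem_filter, Finset.mem_Icc]; omega
    have hcardnT : (Finset.Icc n T).card = T + 1 - n := by simp
    have hK : ((T + 1 - n : ℕ) : ℝ) = (T:ℝ) - (n:ℝ) + 1 := by
      have h : n ≤ T + 1 := by omega
      push_cast [h]
      ring
    have hsplitIcc : ∀ f : ℕ → ℝ, (∑ t ∈ Finset.Icc 1 T, f t)
        = (∑ t ∈ Finset.Icc 1 (n-1), f t) + ∑ t ∈ Finset.Icc n T, f t := by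
      intro f
      have e1 : Finset.Icc 1 (n-1) = Finset.Ioc 0 (n-1) := by rw [← Finset.Icc_add_one_left_eq_Ioc]; rfl
      have e2 : Finset.Icc n T = Finset.Ioc (n-1) T := by
        rw [← Finset.Icc_add_one_left_eq_Ioc]; congr 1; omega
      have e3 : Finset.Icc 1 T = Finset.Ioc 0 T := by rw [← Finset.Icc_add_one_left_eq_Ioc]; rfl
      rw [e1, e2, e3,
        Finset.sum_Ioc_consecutive f (show 0 ≤ n-1 by omega) (show n-1 ≤ T by omega)]
    have hal_n : al (n:ℕ∞) = ((T:ℝ) - (n:ℝ) + 1) / (T:ℝ) := by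
      simp only [hal]
      rw [Finset.sum_congr rfl fun t _ => hdNn t, Finset.sum_boole, hfilter, hcardnT, hK]
      ring
    have hterm : ∀ t : ℕ, dd t (n:ℕ∞) * dN t (n:ℕ∞)
        = if n ≤ t then (1 - al (n:ℕ∞) - F t + Fb) else 0 := by
      intro t
      by_cases h : n ≤ t
      · simp only [hdd, hdNn, if_pos h]; ring
      · simp only [hdd, hdNn, if_neg h]; ring
    rw [Finset.sum_congr rfl fun t _ => hterm t, ← Finset.sum_filter, hfilter]
    have hre : ∀ t : ℕ, (1 - al (n:ℕ∞) - F t + Fb) = (1 - al (n:ℕ∞) + Fb) - F t :=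
      fun t => by ring
    rw [Finset.sum_congr rfl fun t _ => hre t, Finset.sum_sub_distrib, Finset.sum_const,
      hcardnT, nsmul_eq_mul, hK, hal_n, haH n h2 hnT, hFb, hsplitIcc F,
      Finset.sum_sub_distrib, Finset.sum_const, hcardnT, nsmul_eq_mul, hK]
    have hg1 : ((n:ℝ) - 1) ≠ 0 := by
      have h : (2:ℝ) ≤ (n:ℝ) := by exact_mod_cast h2
      intro hc; linarith
    have hK0 : ((T:ℝ) - (n:ℝ) + 1) ≠ 0 := by
      have h : (n:ℝ) ≤ (T:ℝ) := by exact_mod_cast hnT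
      intro hc; linarith
    field_simp
    ring
  -- assemble
  have main2 : (∑ t ∈ Finset.Icc 1 T, ∫ ω, Ddd t ω * Yobs t ω ∂P)
      = ∑ g ∈ S, ((T:ℝ) - (g:ℝ) + 1) * aH g * τ g * (P {ω | G ω = (g:ℕ∞)}).toReal := by
    rw [hNum]
    refine Finset.sum_congr rfl fun n hn => ?_
    rw [hw n hn]
    show ((T:ℝ) - (n:ℝ) + 1) * aH n * (τ n * (P {ω | G ω = (n:ℕ∞)}).toReal) = _
    ring
  have main3 : (∑ t ∈ Finset.Icc 1 T, ∫ ω, (Ddd t ω)^2 ∂P)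
      = ∑ g ∈ S, ((T:ℝ) - (g:ℝ) + 1) * aH g * (P {ω | G ω = (g:ℕ∞)}).toReal := by
    rw [hDen]
    refine Finset.sum_congr rfl fun n hn => ?_
    rw [hw n hn]
  refine ⟨part1, main2, main3, ?_⟩
  rw [main2, main3]
end

section
/- Hadamard directional differentiability of the coordinatewise maximum (Lemma F.1): Fix K ≥ 1 and θ ∈ ℝ^K, and define φ : ℝ^K → ℝ by φ(v) := max_{1 ≤ j ≤ K} v(j). Then for every sequence (h_n) in ℝ^K with h_n → h ∈ ℝ^K and every sequence of positive reals t_n → 0, one has (φ(θ + t_n·h_n) − φ(θ))/t_n → max_{j ∈ A(θ)} h(j), where A(θ) := {j ∈ {1,…,K} : θ(j) = max_{k} θ(k)} is the argmax set of θ. -/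
open Filter Topology

/-- **Lemma F.1** (Hadamard directional differentiability of the coordinatewise maximum).
For `φ(v) = max_j v(j)` on `ℝ^K`, any `h_n → h` and positive `t_n → 0` satisfy
`(φ(θ + t_n h_n) − φ(θ))/t_n → max_{j ∈ A(θ)} h(j)`, where `A(θ)` is the argmax set. -/
theorem max_hadamard_directionally_differentiable
    {K : ℕ} (hK : 0 < K) (θ : Fin K → ℝ)
    (h : Fin K → ℝ) (hn : ℕ → Fin K → ℝ) (t : ℕ → ℝ)
    (hhn : Tendsto hn atTop (𝓝 h))
    (ht_pos : ∀ n, 0 < t n)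
    (ht0 : Tendsto t atTop (𝓝 0)) :
    Tendsto
      (fun n => ((⨆ j, (θ j + t n * hn n j)) - ⨆ j, θ j) / t n)
      atTop
      (𝓝 (⨆ j : {j : Fin K // θ j = ⨆ k, θ k}, h j)) := by
  haveI : Nonempty (Fin K) := ⟨⟨0, hK⟩⟩
  set M : ℝ := ⨆ k, θ k with hMdef
  obtain ⟨j0, hj0⟩ := exists_eq_ciSup_of_finite (f := θ)
  haveI hAne : Nonempty {j : Fin K // θ j = M} := ⟨⟨j0, hj0⟩⟩
  set C : ℝ := (⨆ j, |h j|) + 1 with hCdef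
  have habs : ∀ j, |h j| ≤ C - 1 := by
    intro j
    have := le_ciSup (Set.Finite.bddAbove (Set.finite_range fun j => |h j|)) j
    simp only [hCdef]
    linarith
  have hCpos : 0 < C := by
    have := habs j0
    have : (0:ℝ) ≤ C - 1 := le_trans (abs_nonneg _) this
    linarith
  -- the rewritten difference quotient
  set f : ℕ → Fin K → ℝ := fun n j => (θ j - M) / t n + hn n j with hfdef
  have hθle : ∀ j, θ j ≤ M := fun j =>
    le_ciSup (Set.Finite.bddAbove (Set.finite_range _)) j
  have hid : ∀ n, ((⨆ j, (θ j + t n * hn n j)) - M) / t n = ⨆ j, f n j := by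
    intro n
    have htn := ht_pos n
    apply le_antisymm
    · have h3 : (⨆ j, (θ j + t n * hn n j)) ≤ t n * (⨆ j, f n j) + M := by
        apply ciSup_le
        intro j
        have e : θ j + t n * hn n j = t n * f n j + M := by
          simp only [hfdef]; field_simp; ring
        rw [e]
        have := le_ciSup (Set.Finite.bddAbove (Set.finite_range (f n))) j
        nlinarith
      rw [div_le_iff₀ htn]
      linarith [h3]
    · apply ciSup_le
      intro j
      have e : f n j = (θ j + t n * hn n j - M) / t n := by
        simp only [hfdef]; field_simp; ring
      rw [e]
      gcongr
      exact le_ciSup (f := fun j => θ j + t n * hn n j)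
        (Set.Finite.bddAbove (Set.finite_range _)) j
  -- coordinatewise convergence
  have hcoord : ∀ j, Tendsto (fun n => hn n j) atTop (𝓝 (h j)) := by
    intro j
    exact (tendsto_pi_nhds.mp hhn) j
  -- convergence of the restricted sup
  have hG : Tendsto (fun n => ⨆ j : {j : Fin K // θ j = M}, hn n j) atTop
      (𝓝 (⨆ j : {j : Fin K // θ j = M}, h j)) := by
    have := Filter.Tendsto.finset_sup'_nhds_apply (s := (Finset.univ : Finset {j : Fin K // θ j = M}))
      (f := fun j n => hn n (j : Fin K)) (g := fun j => h (j : Fin K))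
      Finset.univ_nonempty (fun i _ => hcoord i)
    simpa [Finset.sup'_univ_eq_ciSup] using this
  -- eventual coordinatewise closeness
  have hclose : ∀ᶠ n in atTop, ∀ j, |hn n j - h j| ≤ 1 := by
    have := (Metric.tendsto_nhds.mp hhn) 1 one_pos
    filter_upwards [this] with n hd j
    have := dist_le_pi_dist (hn n) h j
    rw [Real.dist_eq] at this
    linarith [le_of_lt hd]
  -- eventual smallness of the gap terms
  have hgap : ∀ᶠ n in atTop, ∀ j, θ j ≠ M → (θ j - M) / t n ≤ -2 * C := by
    rw [eventually_all]
    intro j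
    by_cases hjM : θ j = M
    · exact Eventually.of_forall fun n hcon => absurd hjM hcon
    · have hlt : θ j - M < 0 := by
        have := hθle j
        cases lt_or_eq_of_le this with
        | inl hl => linarith
        | inr he => exact absurd he hjM
      have htinv : Tendsto (fun n => (t n)⁻¹) atTop atTop := by
        apply tendsto_inv_nhdsGT_zero.comp
        exact tendsto_nhdsWithin_iff.mpr ⟨ht0, Eventually.of_forall fun n => ht_pos n⟩
      have : Tendsto (fun n => (θ j - M) * (t n)⁻¹) atTop atBot :=
        (tendsto_const_mul_atBot_of_neg hlt).mpr htinv
      have hev := this.eventually_le_atBot (-2 * C)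
      filter_upwards [hev] with n hev _
      simpa [div_eq_mul_inv] using hev
  -- eventually the full sup equals the restricted sup
  have hkey : ∀ᶠ n in atTop,
      (⨆ j, f n j) = ⨆ j : {j : Fin K // θ j = M}, hn n j := by
    filter_upwards [hclose, hgap] with n hcl hg
    have hbound : ∀ j, |hn n j| ≤ C := by
      intro j
      have := habs j
      have := hcl j
      have h3 := abs_sub_abs_le_abs_sub (hn n j) (h j)
      calc |hn n j| ≤ |h j| + |hn n j - h j| := by linarith
        _ ≤ C := by linarith [habs j, hcl j]
    apply le_antisymm
    · apply ciSup_le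
      intro j
      by_cases hjM : θ j = M
      · have e : f n j = hn n j := by
          simp only [hfdef, hjM]; simp
        rw [e]
        exact le_ciSup (f := fun j : {j : Fin K // θ j = M} => hn n (j : Fin K))
          (Set.Finite.bddAbove (Set.finite_range _)) (⟨j, hjM⟩ : {j : Fin K // θ j = M})
      · have h1 := hg j hjM
        have h2 := hbound j
        have h3 : f n j ≤ -C := by
          have : hn n j ≤ C := (abs_le.mp h2).2
          simp only [hfdef]; linarith
        obtain ⟨ja⟩ := hAne
        have h4 : -C ≤ hn n (ja : Fin K) := by
          have := hbound (ja : Fin K)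
          linarith [(abs_le.mp this).1]
        calc f n j ≤ -C := h3
          _ ≤ hn n (ja : Fin K) := h4
          _ ≤ _ := le_ciSup (f := fun j : {j : Fin K // θ j = M} => hn n (j : Fin K))
            (Set.Finite.bddAbove (Set.finite_range _)) ja
    · apply ciSup_le
      intro j
      have e : f n (j : Fin K) = hn n (j : Fin K) := by
        simp only [hfdef, j.2]; simp
      rw [← e]
      exact le_ciSup (f := f n) (Set.Finite.bddAbove (Set.finite_range _)) (j : Fin K)
  -- conclude
  apply hG.congr'
  filter_upwards [hkey] with n hk
  rw [← hk, ← hid n]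
end

section
/- Proportionality of weight functions with identical weighted estimands (key step, equation (A.1)): Let a, w : Ω → ℝ be 𝒢-measurable with E[a²] < ∞, E[w²] < ∞, E[a] > 0, and E[w] > 0. If E[a·τ]/E[a] = E[w·τ]/E[w] for every 𝒢-measurable τ : Ω → ℝ with E[τ²] < ∞, then a = (E[a]/E[w])·w P-almost surely. In particular, if w takes values in [0,1], then a ≥ 0 P-almost surely. -/
open MeasureTheory


private lemma l2_integrable_mul {Ω : Type*} {mΩ : MeasurableSpace Ω} {P : Measure Ω}
    {f g : Ω → ℝ} (hf : MemLp f 2 P) (hg : MemLp g 2 P) :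
    Integrable (fun ω => f ω * g ω) P := by
  have h := MeasureTheory.L2.integrable_inner (𝕜 := ℝ) (hf.toLp f) (hg.toLp g)
  have hfe := hf.coeFn_toLp
  have hge := hg.coeFn_toLp
  refine h.congr ?_
  filter_upwards [hfe, hge] with ω h1 h2
  simp [h1, h2, RCLike.inner_apply, mul_comm]

/-- **Key step (equation (A.1))** (Proportionality of weight functions with identical
weighted estimands). If `E[a·τ]/E[a] = E[w·τ]/E[w]` for every `𝒢`-measurable
square-integrable `τ`, then `a = (E[a]/E[w])·w` a.s.; in particular if `w` is
`[0,1]`-valued then `a ≥ 0` a.s. -/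
theorem proportionality_of_weight_functions
    {Ω : Type*} {mΩ : MeasurableSpace Ω} (P : Measure Ω) [IsProbabilityMeasure P]
    (𝒢 : MeasurableSpace Ω) (h𝒢 : 𝒢 ≤ mΩ)
    (a w : Ω → ℝ)
    (ha_meas : Measurable[𝒢] a) (hw_meas : Measurable[𝒢] w)
    (ha_L2 : MemLp a 2 P) (hw_L2 : MemLp w 2 P)
    (ha_pos : 0 < ∫ ω, a ω ∂P) (hw_pos : 0 < ∫ ω, w ω ∂P)
    (hrep : ∀ τ : Ω → ℝ, Measurable[𝒢] τ → MemLp τ 2 P →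
      (∫ ω, a ω * τ ω ∂P) / (∫ ω, a ω ∂P) = (∫ ω, w ω * τ ω ∂P) / (∫ ω, w ω ∂P)) :
    (∀ᵐ ω ∂P, a ω = ((∫ ω', a ω' ∂P) / (∫ ω', w ω' ∂P)) * w ω) ∧
    ((∀ ω, 0 ≤ w ω ∧ w ω ≤ 1) → ∀ᵐ ω ∂P, 0 ≤ a ω) := by
  set c := ∫ ω, a ω ∂P with hc
  set d := ∫ ω, w ω ∂P with hd
  have hc0 : c ≠ 0 := ne_of_gt ha_pos
  have hd0 : d ≠ 0 := ne_of_gt hw_pos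
  set τ : Ω → ℝ := fun ω => a ω / c - w ω / d with hτ
  have hτ_meas : Measurable[𝒢] τ :=
    ((ha_meas.div_const c).sub (hw_meas.div_const d))
  have hτ_L2 : MemLp τ 2 P := by
    have h1 : MemLp (fun ω => a ω / c) 2 P := by
      simpa [div_eq_mul_inv, mul_comm] using (ha_L2.const_mul c⁻¹ : MemLp (fun ω => c⁻¹ * a ω) 2 P)
    have h2 : MemLp (fun ω => w ω / d) 2 P := by
      simpa [div_eq_mul_inv, mul_comm] using (hw_L2.const_mul d⁻¹ : MemLp (fun ω => d⁻¹ * w ω) 2 P)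
    exact h1.sub h2
  have haτ : Integrable (fun ω => a ω * τ ω) P := l2_integrable_mul ha_L2 hτ_L2
  have hwτ : Integrable (fun ω => w ω * τ ω) P := l2_integrable_mul hw_L2 hτ_L2
  have key := hrep τ hτ_meas hτ_L2
  -- ∫ τ² = 0
  have hsq : ∫ ω, τ ω * τ ω ∂P = 0 := by
    have heq : ∀ ω, τ ω * τ ω = (a ω * τ ω) / c - (w ω * τ ω) / d := by
      intro ω
      simp only [hτ]
      ring
    rw [show (fun ω => τ ω * τ ω) = fun ω => (a ω * τ ω) / c - (w ω * τ ω) / d from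
      funext heq]
    rw [integral_sub (haτ.div_const c) (hwτ.div_const d), integral_div, integral_div]
    rw [key]
    ring
  have hτ_int_sq : Integrable (fun ω => τ ω * τ ω) P := l2_integrable_mul hτ_L2 hτ_L2
  have hτ0 : ∀ᵐ ω ∂P, τ ω * τ ω = 0 := by
    have hnn : 0 ≤ᵐ[P] fun ω => τ ω * τ ω :=
      Filter.Eventually.of_forall fun ω => mul_self_nonneg _
    exact (integral_eq_zero_iff_of_nonneg_ae hnn hτ_int_sq).mp hsq
  have hmain : ∀ᵐ ω ∂P, a ω = (c / d) * w ω := by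
    filter_upwards [hτ0] with ω hω
    have h0 : τ ω = 0 := by
      by_contra h
      exact h (by nlinarith [mul_self_nonneg (τ ω)])
    have : a ω / c = w ω / d := by
      have := sub_eq_zero.mp h0
      simpa [hτ] using this
    field_simp at this ⊢
    linarith [this]
  refine ⟨hmain, fun hw01 => ?_⟩
  filter_upwards [hmain] with ω hω
  rw [hω]
  exact mul_nonneg (le_of_lt (div_pos ha_pos hw_pos)) (hw01 ω).1
end

section
/- Validity of the internal-validity bounds regardless of the sign of the weights (Section 4.2): Let a : Ω → ℝ be measurable with E[a²] < ∞, E[a] > 0, and a_max := essSup(a) < ∞ (the sign of a is unrestricted), and let τ : Ω → ℝ be integrable with a·τ integrable and B_ℓ ≤ τ ≤ B_u P-almost surely for constants B_ℓ ≤ B_u. Then, with μ := E[a·τ]/E[a] and ρ := E[a]/a_max ∈ (0, 1], one has μ·ρ + B_ℓ·(1 − ρ) ≤ E[τ] ≤ μ·ρ + B_u·(1 − ρ). -/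
open MeasureTheory

/-- **Section 4.2** (Validity of the internal-validity bounds regardless of the sign of
the weights). For a square-integrable weight function `a` with `E[a] > 0` and essential
supremum `a_max < ∞` (sign unrestricted) and an integrable CATE function `τ` with
`a·τ` integrable and `B_ℓ ≤ τ ≤ B_u` a.s., setting `μ := E[a·τ]/E[a]` and
`ρ := E[a]/a_max`, one has `ρ ∈ (0,1]` and
`μ·ρ + B_ℓ·(1 − ρ) ≤ E[τ] ≤ μ·ρ + B_u·(1 − ρ)`. -/
theorem bounds_valid_regardless_of_weight_sign
    {Ω : Type*} {mΩ : MeasurableSpace Ω} (P : Measure Ω) [IsProbabilityMeasure P]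
    (a τ : Ω → ℝ)
    (ha_meas : Measurable a)
    (ha_L2 : MemLp a 2 P)
    (ha_pos : 0 < ∫ ω, a ω ∂P)
    (ha_bdd : ∃ C : ℝ, ∀ᵐ ω ∂P, a ω ≤ C)
    (hτ_int : Integrable τ P)
    (haτ_int : Integrable (fun ω => a ω * τ ω) P)
    (Bl Bu : ℝ) (hB : Bl ≤ Bu)
    (hτ_bdd : ∀ᵐ ω ∂P, Bl ≤ τ ω ∧ τ ω ≤ Bu)
    (a_max : ℝ) (ha_max : a_max = essSup a P)
    (μ : ℝ) (hμ : μ = (∫ ω, a ω * τ ω ∂P) / (∫ ω, a ω ∂P))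
    (ρ : ℝ) (hρ : ρ = (∫ ω, a ω ∂P) / a_max) :
    (0 < ρ ∧ ρ ≤ 1) ∧
    μ * ρ + Bl * (1 - ρ) ≤ (∫ ω, τ ω ∂P) ∧
    (∫ ω, τ ω ∂P) ≤ μ * ρ + Bu * (1 - ρ) := by
  obtain ⟨C, hC⟩ := ha_bdd
  have ha_int : Integrable a P := ha_L2.integrable (by norm_num)
  have hbdd : Filter.IsBoundedUnder (· ≤ ·) (ae P) a := ⟨C, hC⟩
  have hle : ∀ᵐ ω ∂P, a ω ≤ a_max := by
    rw [ha_max]; exact ae_le_essSup hbdd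
  have hEa_le : (∫ ω, a ω ∂P) ≤ a_max := by
    calc (∫ ω, a ω ∂P) ≤ ∫ _, a_max ∂P :=
          integral_mono_ae ha_int (integrable_const _) hle
      _ = a_max := by simp
  have hM : 0 < a_max := lt_of_lt_of_le ha_pos hEa_le
  have hEa_ne : (∫ ω, a ω ∂P) ≠ 0 := ne_of_gt ha_pos
  have hρpos : 0 < ρ := by rw [hρ]; positivity
  have hρle : ρ ≤ 1 := by rw [hρ]; exact (div_le_one hM).2 hEa_le
  have hμρ : μ * ρ = (∫ ω, a ω * τ ω ∂P) / a_max := by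
    rw [hμ, hρ]; field_simp
  -- expansion lemma
  have expand : ∀ B : ℝ, (∫ ω, (a_max - a ω) * (τ ω - B) ∂P)
      = a_max * (∫ ω, τ ω ∂P) - (∫ ω, a ω * τ ω ∂P) - B * a_max + B * (∫ ω, a ω ∂P) := by
    intro B
    have heq : (fun ω => (a_max - a ω) * (τ ω - B))
        = fun ω => (a_max * τ ω - a ω * τ ω - B * a_max) + B * a ω := by
      funext ω; ring
    have e1 : (∫ ω, (a_max * τ ω - a ω * τ ω - B * a_max + B * a ω) ∂P)
        = (∫ ω, (a_max * τ ω - a ω * τ ω - B * a_max) ∂P) + ∫ ω, B * a ω ∂P :=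
      integral_add (((hτ_int.const_mul a_max).sub haτ_int).sub (integrable_const _))
        (ha_int.const_mul B)
    have e2 : (∫ ω, (a_max * τ ω - a ω * τ ω - B * a_max) ∂P)
        = (∫ ω, (a_max * τ ω - a ω * τ ω) ∂P) - ∫ _, B * a_max ∂P :=
      integral_sub ((hτ_int.const_mul a_max).sub haτ_int) (integrable_const _)
    have e3 : (∫ ω, (a_max * τ ω - a ω * τ ω) ∂P)
        = (∫ ω, a_max * τ ω ∂P) - ∫ ω, a ω * τ ω ∂P :=
      integral_sub (hτ_int.const_mul a_max) haτ_int
    have e4 : (∫ ω, a_max * τ ω ∂P) = a_max * ∫ ω, τ ω ∂P := integral_const_mul _ _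
    have e5 : (∫ ω, B * a ω ∂P) = B * ∫ ω, a ω ∂P := integral_const_mul _ _
    have e6 : (∫ _ : Ω, B * a_max ∂P) = B * a_max := by simp
    rw [heq, e1, e2, e3, e4, e5, e6]
  refine ⟨⟨hρpos, hρle⟩, ?_, ?_⟩
  · have key : 0 ≤ ∫ ω, (a_max - a ω) * (τ ω - Bl) ∂P := by
      apply integral_nonneg_of_ae
      filter_upwards [hle, hτ_bdd] with ω h1 h2
      exact mul_nonneg (by linarith) (by linarith [h2.1])
    rw [expand Bl] at key
    rw [hμρ, hρ]
    have h1 : (∫ ω, a ω * τ ω ∂P) / a_max + Bl * (1 - (∫ ω, a ω ∂P) / a_max)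
        = ((∫ ω, a ω * τ ω ∂P) + Bl * (a_max - (∫ ω, a ω ∂P))) / a_max := by
      field_simp
    rw [h1, div_le_iff₀ hM]
    nlinarith
  · have key : 0 ≤ ∫ ω, (a_max - a ω) * (Bu - τ ω) ∂P := by
      apply integral_nonneg_of_ae
      filter_upwards [hle, hτ_bdd] with ω h1 h2
      exact mul_nonneg (by linarith) (by linarith [h2.2])
    have heq : (fun ω => (a_max - a ω) * (Bu - τ ω))
        = fun ω => -((a_max - a ω) * (τ ω - Bu)) := by funext ω; ring
    rw [heq, integral_neg, expand Bu] at key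
    rw [hμρ, hρ]
    have h1 : (∫ ω, a ω * τ ω ∂P) / a_max + Bu * (1 - (∫ ω, a ω ∂P) / a_max)
        = ((∫ ω, a ω * τ ω ∂P) + Bu * (a_max - (∫ ω, a ω ∂P))) / a_max := by
      field_simp
    rw [h1, le_div_iff₀ hM]
    nlinarith
end

section
/- Equivalence of the two TWFE weight formulas (Appendix G): Let T ≥ 2, let G : Ω → {2,…,T} ∪ {∞} be a random adoption date, let P be uniformly distributed on {1,…,T} and independent of G, and set D := 1{G ≤ P}. Then for every k ∈ {2,…,T} with P(G = k) > 0: 1 − E[D | G = k] − E[D·1{P ≥ k}]/P(P ≥ k) + E[D] = E[D] − E[D | G = k] + P(G > k) − E[D·1{G > k}]/E[D | G = k]. -/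
open MeasureTheory ProbabilityTheory
open scoped ENNReal

/-- **Appendix G** (Equivalence of the two TWFE weight formulas). With `G` the adoption
date, `Pv` uniform on `{1,…,T}` and independent of `G`, and `D = 1{G ≤ Pv}`, for every
`k ∈ {2,…,T}` with `P(G = k) > 0`:
`1 − E[D|G=k] − E[D·1{Pv ≥ k}]/P(Pv ≥ k) + E[D]
  = E[D] − E[D|G=k] + P(G > k) − E[D·1{G > k}]/E[D|G=k]`. -/
theorem twfe_weight_formulas_equivalent
    {Ω : Type*} {mΩ : MeasurableSpace Ω} (P : Measure Ω) [IsProbabilityMeasure P]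
    (T : ℕ) (hT : 2 ≤ T)
    (G : Ω → ℕ∞) (hG_meas : Measurable G)
    (hG_range : ∀ ω, G ω = ⊤ ∨ (2 ≤ G ω ∧ G ω ≤ (T : ℕ∞)))
    (Pv : Ω → ℕ) (hPv_meas : Measurable Pv)
    (hPv_range : ∀ ω, 1 ≤ Pv ω ∧ Pv ω ≤ T)
    (hPv_unif : ∀ t : ℕ, 1 ≤ t → t ≤ T → P {ω | Pv ω = t} = ((T : ℝ≥0∞))⁻¹)
    (hindep : IndepFun G Pv P)
    (D : Ω → ℝ) (hD : ∀ ω, D ω = if G ω ≤ (Pv ω : ℕ∞) then 1 else 0)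
    (k : ℕ) (hk2 : 2 ≤ k) (hkT : k ≤ T)
    (hGk_pos : 0 < P {ω | G ω = (k : ℕ∞)}) :
    1 - (∫ ω in {ω | G ω = (k : ℕ∞)}, D ω ∂P) / (P {ω | G ω = (k : ℕ∞)}).toReal
      - (∫ ω in {ω | k ≤ Pv ω}, D ω ∂P) / (P {ω | k ≤ Pv ω}).toReal
      + (∫ ω, D ω ∂P)
    = (∫ ω, D ω ∂P)
      - (∫ ω in {ω | G ω = (k : ℕ∞)}, D ω ∂P) / (P {ω | G ω = (k : ℕ∞)}).toReal
      + (P {ω | (k : ℕ∞) < G ω}).toReal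
      - (∫ ω in {ω | (k : ℕ∞) < G ω}, D ω ∂P) /
          ((∫ ω in {ω | G ω = (k : ℕ∞)}, D ω ∂P) / (P {ω | G ω = (k : ℕ∞)}).toReal) := by
  classical
  -- the "treated" set
  set S : Set Ω := {ω | G ω ≤ (Pv ω : ℕ∞)} with hSdef
  have hS : MeasurableSet S := by
    have hrw : S = ⋃ t : ℕ, (Pv ⁻¹' {t} ∩ G ⁻¹' {n | n ≤ (t : ℕ∞)}) := by
      ext ω
      simp only [hSdef, Set.mem_iUnion, Set.mem_inter_iff, Set.mem_preimage,
        Set.mem_setOf_eq, Set.mem_singleton_iff]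
      constructor
      · intro h; exact ⟨Pv ω, rfl, h⟩
      · rintro ⟨t, ht, h⟩; rw [ht]; exact h
    rw [hrw]
    exact MeasurableSet.iUnion fun t =>
      (hPv_meas (measurableSet_singleton t)).inter
        (hG_meas ((Set.to_countable _).measurableSet))
  -- D is the indicator of S
  have hD_ind : D = S.indicator (fun _ => (1 : ℝ)) := by
    funext ω
    rw [hD]
    by_cases h : G ω ≤ (Pv ω : ℕ∞)
    · simp [Set.indicator_apply, hSdef, h]
    · simp [Set.indicator_apply, hSdef, h]
  -- integrals of D are measures
  have hInt : ∀ E : Set Ω, MeasurableSet E →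
      ∫ ω in E, D ω ∂P = (P (S ∩ E)).toReal := by
    intro E hE
    rw [hD_ind, setIntegral_indicator hS, setIntegral_const, smul_eq_mul, mul_one,
      Set.inter_comm]
    rfl
  have hIntTot : ∫ ω, D ω ∂P = (P S).toReal := by
    rw [hD_ind, integral_indicator hS, setIntegral_const, smul_eq_mul, mul_one]
    rfl
  -- measurable sets
  have hGk : MeasurableSet {ω | G ω = (k : ℕ∞)} :=
    hG_meas (measurableSet_singleton _)
  have hPk : MeasurableSet {ω | k ≤ Pv ω} := hPv_meas measurableSet_Ici
  have hGgt : MeasurableSet {ω | (k : ℕ∞) < G ω} :=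
    hG_meas ((Set.to_countable {n : ℕ∞ | (k : ℕ∞) < n}).measurableSet)
  have hGle : MeasurableSet {ω | G ω ≤ (k : ℕ∞)} :=
    hG_meas ((Set.to_countable {n : ℕ∞ | n ≤ (k : ℕ∞)}).measurableSet)
  -- independence facts
  have hind1 : P (S ∩ {ω | G ω = (k : ℕ∞)})
      = P {ω | G ω = (k : ℕ∞)} * P {ω | k ≤ Pv ω} := by
    have hset : S ∩ {ω | G ω = (k : ℕ∞)}
        = G ⁻¹' {(k : ℕ∞)} ∩ Pv ⁻¹' (Set.Ici k) := by
      ext ω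
      simp only [hSdef, Set.mem_inter_iff, Set.mem_setOf_eq, Set.mem_preimage,
        Set.mem_singleton_iff, Set.mem_Ici]
      constructor
      · rintro ⟨h1, h2⟩
        refine ⟨h2, ?_⟩
        rw [h2] at h1
        exact_mod_cast h1
      · rintro ⟨h1, h2⟩
        refine ⟨?_, h1⟩
        rw [h1]
        exact_mod_cast h2
    rw [hset, hindep.measure_inter_preimage_eq_mul _ _
      (measurableSet_singleton _) measurableSet_Ici]
    rfl
  have hind2 : P ({ω | G ω ≤ (k : ℕ∞)} ∩ {ω | k ≤ Pv ω})
      = P {ω | G ω ≤ (k : ℕ∞)} * P {ω | k ≤ Pv ω} := by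
    have hset : {ω | G ω ≤ (k : ℕ∞)} ∩ {ω | k ≤ Pv ω}
        = G ⁻¹' {n | n ≤ (k : ℕ∞)} ∩ Pv ⁻¹' (Set.Ici k) := rfl
    rw [hset, hindep.measure_inter_preimage_eq_mul _ _
      ((Set.to_countable _).measurableSet) measurableSet_Ici]
    rfl
  -- decomposition of S ∩ {k ≤ Pv}
  have hdecomp : P (S ∩ {ω | k ≤ Pv ω})
      = P ({ω | G ω ≤ (k : ℕ∞)} ∩ {ω | k ≤ Pv ω}) + P (S ∩ {ω | (k : ℕ∞) < G ω}) := by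
    have hset : S ∩ {ω | k ≤ Pv ω}
        = ({ω | G ω ≤ (k : ℕ∞)} ∩ {ω | k ≤ Pv ω}) ∪ (S ∩ {ω | (k : ℕ∞) < G ω}) := by
      ext ω
      simp only [hSdef, Set.mem_inter_iff, Set.mem_union, Set.mem_setOf_eq]
      constructor
      · rintro ⟨h1, h2⟩
        rcases le_or_gt (G ω) (k : ℕ∞) with h | h
        · exact Or.inl ⟨h, h2⟩
        · exact Or.inr ⟨h1, h⟩
      · rintro (⟨h1, h2⟩ | ⟨h1, h2⟩)
        · refine ⟨le_trans h1 ?_, h2⟩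
          exact_mod_cast h2
        · refine ⟨h1, ?_⟩
          have : (k : ℕ∞) ≤ (Pv ω : ℕ∞) := le_trans h2.le h1
          exact_mod_cast this
    rw [hset, measure_union _ (hS.inter hGgt)]
    refine Set.disjoint_left.mpr ?_
    rintro ω ⟨h1, -⟩ ⟨-, h2⟩
    simp only [Set.mem_setOf_eq] at h1 h2
    exact absurd h1 (not_le.mpr h2)
  -- complementarity
  have hcompl : P {ω | G ω ≤ (k : ℕ∞)} = 1 - P {ω | (k : ℕ∞) < G ω} := by
    have : {ω | G ω ≤ (k : ℕ∞)} = {ω | (k : ℕ∞) < G ω}ᶜ := by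
      ext ω; simp [not_lt]
    rw [this, measure_compl hGgt (measure_ne_top P _), measure_univ]
  -- positivity facts
  have hTpos : (0 : ℝ≥0∞) < (T : ℝ≥0∞)⁻¹ := by
    simp [ENNReal.inv_pos]
  have hPk_pos : 0 < P {ω | k ≤ Pv ω} := by
    refine lt_of_lt_of_le ?_ (measure_mono (s := {ω | Pv ω = T}) ?_)
    · rw [hPv_unif T (by omega) le_rfl]; exact hTpos
    · intro ω hω
      simp only [Set.mem_setOf_eq] at hω ⊢
      omega
  -- real abbreviations
  set a : ℝ := (P {ω | G ω = (k : ℕ∞)}).toReal with ha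
  set r : ℝ := (P {ω | k ≤ Pv ω}).toReal with hr
  set c : ℝ := (P (S ∩ {ω | (k : ℕ∞) < G ω})).toReal with hc
  set g : ℝ := (P {ω | (k : ℕ∞) < G ω}).toReal with hg
  have ha_pos : 0 < a := ENNReal.toReal_pos hGk_pos.ne' (measure_ne_top P _)
  have hr_pos : 0 < r := ENNReal.toReal_pos hPk_pos.ne' (measure_ne_top P _)
  have hg_le : P {ω | (k : ℕ∞) < G ω} ≤ 1 := prob_le_one
  -- rewrite integrals
  rw [hInt _ hGk, hInt _ hPk, hInt _ hGgt, hIntTot, hind1, hdecomp, hind2, hcompl]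
  rw [ENNReal.toReal_add (by finiteness) (by finiteness), ENNReal.toReal_mul,
    ENNReal.toReal_mul, ENNReal.toReal_sub_of_le hg_le (by finiteness),
    ENNReal.toReal_one]
  rw [← ha, ← hr, ← hc, ← hg]
  have h1 : a * r / a = r := by field_simp
  rw [h1]
  field_simp
  ring
end

section
/- Upper bound on the internal validity of the OLS estimand when 1/2 is in the support of the propensity score (Section 5.1): Let p be a random variable with values in [0,1] such that 1/2 lies in the support of the distribution of p, i.e., P(|p − 1/2| < ε) > 0 for every ε > 0. Then essSup(p·(1−p)) = 1/4, and consequently E[p·(1−p)]/essSup(p·(1−p)) ≤ 4·E[p]·(1 − E[p]). -/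
open MeasureTheory

/-- **Section 5.1** (Upper bound on the internal validity of the OLS estimand when `1/2`
is in the support of the propensity score). If `p` takes values in `[0,1]` and `1/2` lies
in the support of its distribution, then `essSup(p(1−p)) = 1/4` and therefore
`E[p(1−p)]/essSup(p(1−p)) ≤ 4·E[p]·(1 − E[p])`. -/
theorem ols_internal_validity_upper_bound
    {Ω : Type*} {mΩ : MeasurableSpace Ω} (P : Measure Ω) [IsProbabilityMeasure P]
    (p : Ω → ℝ) (hp_meas : Measurable p)
    (hp01 : ∀ ω, 0 ≤ p ω ∧ p ω ≤ 1)
    (hsupp : ∀ ε : ℝ, 0 < ε → 0 < P {ω | |p ω - 1/2| < ε}) :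
    essSup (fun ω => p ω * (1 - p ω)) P = 1/4 ∧
    (∫ ω, p ω * (1 - p ω) ∂P) / essSup (fun ω => p ω * (1 - p ω)) P ≤
      4 * (∫ ω, p ω ∂P) * (1 - ∫ ω, p ω ∂P) := by
  set f : Ω → ℝ := fun ω => p ω * (1 - p ω) with hf
  have hfle : ∀ ω, f ω ≤ 1/4 := by
    intro ω
    have h0 : 0 ≤ (p ω - 1/2)^2 := sq_nonneg _
    simp only [hf]
    nlinarith
  have hess : essSup f P = 1/4 := by
    rw [essSup_eq_sInf]
    have hmem : (1/4 : ℝ) ∈ {a : ℝ | P {x | a < f x} = 0} := by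
      have : {x | (1/4 : ℝ) < f x} = ∅ := by
        ext ω; simp only [Set.mem_setOf_eq, Set.mem_empty_iff_false, iff_false, not_lt]
        exact hfle ω
      show P {x | (1/4:ℝ) < f x} = 0
      rw [this]; simp
    apply le_antisymm
    · exact csInf_le ⟨1/4, fun a ha => by
        by_contra h
        push_neg at h
        have hε : (0:ℝ) < Real.sqrt (1/4 - a) := Real.sqrt_pos.mpr (by linarith)
        have hsub : {ω | |p ω - 1/2| < Real.sqrt (1/4 - a)} ⊆ {x | a < f x} := by
          intro ω hω
          simp only [Set.mem_setOf_eq] at hω ⊢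
          have h2 : (p ω - 1/2)^2 < 1/4 - a := by
            have := abs_nonneg (p ω - 1/2)
            calc (p ω - 1/2)^2 = |p ω - 1/2|^2 := (sq_abs _).symm
              _ < Real.sqrt (1/4 - a)^2 := by
                  apply sq_lt_sq' _ hω; linarith
              _ = 1/4 - a := Real.sq_sqrt (by linarith)
          simp only [hf]; nlinarith
        have := hsupp _ hε
        have : 0 < P {x | a < f x} := lt_of_lt_of_le this (measure_mono hsub)
        exact this.ne' ha⟩ hmem
    · apply le_csInf ⟨_, hmem⟩
      intro a ha
      by_contra h
      push_neg at h
      have hε : (0:ℝ) < Real.sqrt (1/4 - a) := Real.sqrt_pos.mpr (by linarith)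
      have hsub : {ω | |p ω - 1/2| < Real.sqrt (1/4 - a)} ⊆ {x | a < f x} := by
        intro ω hω
        simp only [Set.mem_setOf_eq] at hω ⊢
        have h2 : (p ω - 1/2)^2 < 1/4 - a := by
          calc (p ω - 1/2)^2 = |p ω - 1/2|^2 := (sq_abs _).symm
            _ < Real.sqrt (1/4 - a)^2 := by
                apply sq_lt_sq' _ hω; linarith [abs_nonneg (p ω - 1/2)]
            _ = 1/4 - a := Real.sq_sqrt (by linarith)
        simp only [hf]; nlinarith
      have hpos := lt_of_lt_of_le (hsupp _ hε) (measure_mono hsub)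
      exact hpos.ne' ha
  refine ⟨hess, ?_⟩
  have hintp : Integrable p P := by
    refine ⟨hp_meas.aestronglyMeasurable, ?_⟩
    apply HasFiniteIntegral.of_bounded (C := 1)
    filter_upwards with ω
    rw [Real.norm_eq_abs, abs_le]
    exact ⟨by linarith [(hp01 ω).1], (hp01 ω).2⟩
  have hintp2 : Integrable (fun ω => p ω ^ 2) P := by
    refine ⟨(hp_meas.pow_const 2).aestronglyMeasurable, ?_⟩
    apply HasFiniteIntegral.of_bounded (C := 1)
    filter_upwards with ω
    rw [Real.norm_eq_abs, abs_le]
    constructor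
    · nlinarith [(hp01 ω).1]
    · nlinarith [(hp01 ω).1, (hp01 ω).2]
  set m : ℝ := ∫ ω, p ω ∂P with hm
  have hvar : m^2 ≤ ∫ ω, p ω ^ 2 ∂P := by
    have h0 : 0 ≤ ∫ ω, (p ω - m)^2 ∂P :=
      integral_nonneg fun ω => sq_nonneg _
    have hexp : ∫ ω, (p ω - m)^2 ∂P = (∫ ω, p ω ^ 2 ∂P) - 2*m*m + m^2 := by
      have : (fun ω => (p ω - m)^2) = fun ω => p ω ^ 2 - (2*m) * p ω + m^2 := by
        funext ω; ring
      rw [this, integral_add (by exact hintp2.sub (hintp.const_mul (2*m))) (integrable_const _),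
        integral_sub hintp2 (by exact hintp.const_mul (2*m)), MeasureTheory.integral_const_mul, integral_const]
      simp [hm]
    nlinarith [hexp ▸ h0]
  have hintf : ∫ ω, f ω ∂P = m - ∫ ω, p ω ^ 2 ∂P := by
    have : (fun ω => f ω) = fun ω => p ω - p ω ^ 2 := by
      funext ω; simp only [hf]; ring
    rw [this, integral_sub hintp hintp2]
  rw [hess, hintf]
  rw [div_le_iff₀ (by norm_num : (0:ℝ) < 1/4)] at *
  nlinarith
end
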